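/- arXiv:1212.6617 — 8 statements merged into one kernel-verified Lean document; each statement's English description precedes it below -/
import Mathlib

section
/- Let B be a real symmetric n×n matrix with B_{ii} = 1 for all i and B_{ij} ≤ 0 for all i ≠ j, such that the matrix I − B is irreducible (i.e., the graph on {1,...,n} with edges {i,j} whenever B_{ij} ≠ 0 is connected) and B has exactly one negative eigenvalue. Then every eigenvector of B corresponding to the negative eigenvalue has all coordinates of the same sign (all strictly positive or all strictly negative). -/
open Matrix

/-- Expansion of a vector in the eigenbasis of a hermitian matrix, in coordinates. -/
private lemma stmt0_expand (n : ℕ) (B : Matrix (Fin n) (Fin n) ℝ) (hB : B.IsHermitian)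
    (x : Fin n → ℝ) (j : Fin n) :
    x j = ∑ i, ((fun k => hB.eigenvectorBasis i k) ⬝ᵥ x) * hB.eigenvectorBasis i j := by
  have h := hB.eigenvectorBasis.sum_repr' (WithLp.toLp 2 x : EuclideanSpace ℝ (Fin n))
  conv_lhs => rw [show x j = (WithLp.toLp 2 x : EuclideanSpace ℝ (Fin n)) j from rfl, ← h]
  simp [PiLp.inner_apply, dotProduct, mul_comm]

/-- A nonnegative eigenvector of a matrix with nonpositive off-diagonal entries and
connected support graph is strictly positive. -/
private lemma stmt0_aux_pos (n : ℕ) (B : Matrix (Fin n) (Fin n) ℝ) (hB : B.IsHermitian)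
    (hoff : ∀ i j, i ≠ j → B i j ≤ 0)
    (hconn : (SimpleGraph.fromRel (fun i j : Fin n => B i j ≠ 0)).Connected)
    (v : Fin n → ℝ) (μ : ℝ) (hv : B.mulVec v = μ • v) (hv0 : v ≠ 0)
    (hsign : ∀ j, 0 ≤ v j) : ∀ i, 0 < v i := by
  classical
  have hsymm : ∀ i j, B i j = B j i := by
    intro i j
    have := congr_fun (congr_fun hB i) j
    simpa [Matrix.conjTranspose_apply] using this.symm
  have hprop : ∀ i j, i ≠ j → v i = 0 → B i j ≠ 0 → v j = 0 := by
    intro i j hij hvi hBij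
    have h1 : ∑ k, B i k * v k = 0 := by
      have := congr_fun hv i
      simpa [Matrix.mulVec, dotProduct, hvi] using this
    have h2 : ∀ k ∈ Finset.univ, B i k * v k ≤ 0 := by
      intro k _
      rcases eq_or_ne k i with rfl | hk
      · simp [hvi]
      · exact mul_nonpos_of_nonpos_of_nonneg (hoff i k (Ne.symm hk)) (hsign k)
    have h3 := (Finset.sum_eq_zero_iff_of_nonpos h2).mp h1 j (Finset.mem_univ j)
    rcases mul_eq_zero.mp h3 with h | h
    · exact absurd h hBij
    · exact h
  obtain ⟨j₀, hj₀⟩ : ∃ j, v j ≠ 0 := Function.ne_iff.mp hv0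
  intro i
  rcases (hsign i).lt_or_eq with h | h
  · exact h
  · exfalso
    have key : ∀ a b : Fin n,
        (SimpleGraph.fromRel (fun i j : Fin n => B i j ≠ 0)).Walk a b → v a = 0 → v b = 0 := by
      intro a b p
      induction p with
      | nil => exact id
      | @cons a c b hadj p ih =>
        intro ha
        rw [SimpleGraph.fromRel_adj] at hadj
        obtain ⟨hne, hor⟩ := hadj
        have hBac : B a c ≠ 0 := by
          rcases hor with h' | h'
          · exact h'
          · rw [hsymm a c]; exact h'
        exact ih (hprop a c hne ha hBac)
    obtain ⟨p⟩ := hconn i j₀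
    exact hj₀ (key i j₀ p h.symm)

/-- For a real symmetric matrix `B` with unit diagonal, nonpositive
off-diagonal entries, irreducible `I - B` (connected graph on nonzero entries) and
exactly one negative eigenvalue, every eigenvector for a negative eigenvalue has all
coordinates of the same strict sign. -/
theorem stmt0 (n : ℕ) (B : Matrix (Fin n) (Fin n) ℝ) (hB : B.IsHermitian)
    (hdiag : ∀ i, B i i = 1)
    (hoff : ∀ i j, i ≠ j → B i j ≤ 0)
    (hconn : (SimpleGraph.fromRel (fun i j : Fin n => B i j ≠ 0)).Connected)
    (hneg : (Finset.univ.filter (fun i => hB.eigenvalues i < 0)).card = 1)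
    (v : Fin n → ℝ) (μ : ℝ) (hμ : μ < 0) (hv : B.mulVec v = μ • v) (hv0 : v ≠ 0) :
    (∀ i, 0 < v i) ∨ (∀ i, v i < 0) := by
  classical
  set lam : Fin n → ℝ := hB.eigenvalues with hlam
  set u : Fin n → Fin n → ℝ := fun i k => hB.eigenvectorBasis i k with hu
  have hexp : ∀ (x : Fin n → ℝ) (j : Fin n), x j = ∑ i, (u i ⬝ᵥ x) * u i j :=
    fun x j => stmt0_expand n B hB x j
  have hBu : ∀ i, B.mulVec (u i) = lam i • u i := fun i => hB.mulVec_eigenvectorBasis i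
  have hBt : B.transpose = B := by
    ext i j
    have := congr_fun (congr_fun hB i) j
    simpa [Matrix.conjTranspose_apply] using this
  have hkey : ∀ (i) (x : Fin n → ℝ), u i ⬝ᵥ B.mulVec x = lam i * (u i ⬝ᵥ x) := by
    intro i x
    rw [Matrix.dotProduct_mulVec, ← Matrix.mulVec_transpose, hBt, hBu i,
      smul_dotProduct]
    simp
  set d : Fin n → ℝ := fun i => u i ⬝ᵥ v with hd
  set w : Fin n → ℝ := fun j => |v j| with hw
  set c : Fin n → ℝ := fun i => u i ⬝ᵥ w with hc
  have hdrfl : ∀ i, u i ⬝ᵥ v = d i := fun _ => rfl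
  have hcrfl : ∀ i, u i ⬝ᵥ w = c i := fun _ => rfl
  have hlamd : ∀ i, lam i * d i = μ * d i := by
    intro i
    have h1 : u i ⬝ᵥ B.mulVec v = μ * d i := by
      rw [hv, dotProduct_smul]
      simp [hd]
    rw [← h1, hkey i v]
  -- find the negative eigen-index
  have hdex : ∃ i, d i ≠ 0 := by
    by_contra hcon
    push_neg at hcon
    apply hv0
    funext j
    have := hexp v j
    simp only [hdrfl, hcon, zero_mul, Finset.sum_const_zero] at this
    simpa using this
  obtain ⟨i₀, hi₀⟩ := hdex
  have hmu : lam i₀ = μ := by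
    have := hlamd i₀
    exact mul_right_cancel₀ hi₀ this
  have hfilter : Finset.univ.filter (fun i => lam i < 0) = {i₀} := by
    obtain ⟨a, ha⟩ := Finset.card_eq_one.mp hneg
    have hmem : i₀ ∈ Finset.univ.filter (fun i => lam i < 0) := by
      simp [hmu, hμ]
    rw [ha] at hmem ⊢
    simp only [Finset.mem_singleton] at hmem
    rw [hmem]
  have hnn : ∀ i, i ≠ i₀ → 0 ≤ lam i := by
    intro i hi
    by_contra hcon
    push_neg at hcon
    have : i ∈ Finset.univ.filter (fun i => lam i < 0) := by simp [hcon]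
    rw [hfilter] at this
    exact hi (Finset.mem_singleton.mp this)
  have hdzero : ∀ i, i ≠ i₀ → d i = 0 := by
    intro i hi
    have h1 := hlamd i
    have h2 : (lam i - μ) * d i = 0 := by linarith [h1]
    have h3 : 0 < lam i - μ := by linarith [hnn i hi]
    rcases mul_eq_zero.mp h2 with h | h
    · exact absurd h (ne_of_gt h3)
    · exact h
  -- Parseval-type identity (using only completeness)
  have hpar : ∀ x y : Fin n → ℝ, x ⬝ᵥ y = ∑ i, (u i ⬝ᵥ x) * (u i ⬝ᵥ y) := by
    intro x y
    have h1 : x ⬝ᵥ y = ∑ j, ∑ i, (u i ⬝ᵥ x) * u i j * y j := by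
      refine Finset.sum_congr rfl fun j _ => ?_
      conv_lhs => rw [hexp x j]
      rw [Finset.sum_mul]
    rw [h1, Finset.sum_comm]
    refine Finset.sum_congr rfl fun i _ => ?_
    simp only [dotProduct, Finset.mul_sum]
    exact Finset.sum_congr rfl fun j _ => by ring
  -- quadratic form comparison
  have hQle : w ⬝ᵥ B.mulVec w ≤ v ⬝ᵥ B.mulVec v := by
    simp only [dotProduct, Matrix.mulVec, Finset.mul_sum]
    refine Finset.sum_le_sum fun i _ => Finset.sum_le_sum fun j _ => ?_
    rcases eq_or_ne i j with rfl | hij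
    · simp only [hw, hdiag i, one_mul]
      rw [abs_mul_abs_self]
    · have h1 : v i * v j ≤ |v i| * |v j| := by rw [← abs_mul]; exact le_abs_self _
      have h2 := hoff i j hij
      simp only [hw]
      nlinarith [mul_le_mul_of_nonpos_left h1 h2]
  have hQv : v ⬝ᵥ B.mulVec v = μ * (w ⬝ᵥ w) := by
    rw [hv, dotProduct_smul, smul_eq_mul]
    congr 1
    simp only [dotProduct, hw]
    exact Finset.sum_congr rfl fun i _ => by rw [abs_mul_abs_self]
  have hQw : w ⬝ᵥ B.mulVec w = ∑ i, lam i * (c i) ^ 2 := by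
    rw [hpar w (B.mulVec w)]
    refine Finset.sum_congr rfl fun i _ => ?_
    rw [hkey i w, hcrfl i]
    ring
  have hww : w ⬝ᵥ w = ∑ i, (c i) ^ 2 := by
    rw [hpar w w]
    exact Finset.sum_congr rfl fun i _ => by rw [hcrfl i]; ring
  have hsum : ∑ i, (lam i - μ) * (c i) ^ 2 ≤ 0 := by
    have h1 := hQle
    rw [hQw, hQv, hww, Finset.mul_sum] at h1
    have h2 : ∑ i, (lam i - μ) * (c i) ^ 2 = (∑ i, lam i * c i ^ 2) - ∑ i, μ * c i ^ 2 := by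
      rw [← Finset.sum_sub_distrib]
      exact Finset.sum_congr rfl fun i _ => by ring
    rw [h2]
    linarith
  have htnn : ∀ i ∈ Finset.univ, 0 ≤ (lam i - μ) * (c i) ^ 2 := by
    intro i _
    rcases eq_or_ne i i₀ with rfl | hi
    · rw [hmu]; simp
    · exact mul_nonneg (by linarith [hnn i hi]) (sq_nonneg _)
  have hzero := (Finset.sum_eq_zero_iff_of_nonneg htnn).mp
    (le_antisymm hsum (Finset.sum_nonneg htnn))
  have hczero : ∀ i, i ≠ i₀ → c i = 0 := by
    intro i hi
    have h1 := hzero i (Finset.mem_univ i)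
    have h3 : 0 < lam i - μ := by linarith [hnn i hi]
    rcases mul_eq_zero.mp h1 with h | h
    · exact absurd h (ne_of_gt h3)
    · exact pow_eq_zero_iff (by norm_num) |>.mp h
  -- collapse the expansions
  have hwj : ∀ j, w j = c i₀ * u i₀ j := by
    intro j
    rw [hexp w j, Finset.sum_eq_single i₀
      (fun b _ hb => by rw [hcrfl b, hczero b hb, zero_mul])
      (fun h => absurd (Finset.mem_univ i₀) h), hcrfl]
  have hvj : ∀ j, v j = d i₀ * u i₀ j := by
    intro j
    rw [hexp v j, Finset.sum_eq_single i₀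
      (fun b _ hb => by rw [hdrfl b, hdzero b hb, zero_mul])
      (fun h => absurd (Finset.mem_univ i₀) h), hdrfl]
  have habs : ∀ j, |v j| = (c i₀ / d i₀) * v j := by
    intro j
    calc |v j| = c i₀ * u i₀ j := hwj j
    _ = (c i₀ / d i₀) * (d i₀ * u i₀ j) := by field_simp
    _ = (c i₀ / d i₀) * v j := by rw [← hvj j]
  rcases lt_or_ge 0 (c i₀ / d i₀) with ht | ht
  · left
    have hsg : ∀ j, 0 ≤ v j := by
      intro j
      by_contra hcon
      push_neg at hcon
      have h1 := habs j
      rw [abs_of_neg hcon] at h1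
      nlinarith
    exact stmt0_aux_pos n B hB hoff hconn v μ hv hv0 hsg
  · right
    have hsg : ∀ j, v j ≤ 0 := by
      intro j
      by_contra hcon
      push_neg at hcon
      have h1 := habs j
      rw [abs_of_pos hcon] at h1
      nlinarith
    have h1 : B.mulVec (-v) = μ • (-v) := by
      rw [Matrix.mulVec_neg, hv, smul_neg]
    have h2 := stmt0_aux_pos n B hB hoff hconn (-v) μ h1 (neg_ne_zero.mpr hv0)
      (fun j => by simpa using hsg j)
    intro i
    have := h2 i
    simp only [Pi.neg_apply] at this
    linarith
end

section
/- Let B be a symmetric bilinear form on ℝⁿ of signature (n−1,1) with negative-eigenvalue unit eigenvector o, and for v with |v|₁ := ⟨v,o⟩ ≠ 0 write v̂ = v/|v|₁. For x, y ∈ Q \ {0} (where Q is the isotropic cone of B): (a) B(x,y) = 0 if and only if x̂ = ŷ; (b) if x̂ ≠ ŷ then B(x̂, ŷ) < 0. -/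
open Matrix

/-- For nonzero isotropic vectors `x, y` of a form of signature `(n-1,1)`:
(a) `B(x,y) = 0` iff the normalizations coincide; (b) if the normalizations differ then
`B(x̂, ŷ) < 0`. -/
theorem stmt2 (n : ℕ) (B : Matrix (Fin n) (Fin n) ℝ) (hB : B.IsHermitian)
    (hneg : (Finset.univ.filter (fun i => hB.eigenvalues i < 0)).card = 1)
    (hpos : (Finset.univ.filter (fun i => 0 < hB.eigenvalues i)).card = n - 1)
    (o : Fin n → ℝ) (μ : ℝ) (hμ : μ < 0) (ho : B.mulVec o = μ • o)
    (honorm : o ⬝ᵥ o = 1)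
    (x y : Fin n → ℝ)
    (hx : x ⬝ᵥ B.mulVec x = 0) (hx0 : x ≠ 0)
    (hy : y ⬝ᵥ B.mulVec y = 0) (hy0 : y ≠ 0) :
    (x ⬝ᵥ B.mulVec y = 0 ↔ (x ⬝ᵥ o)⁻¹ • x = (y ⬝ᵥ o)⁻¹ • y) ∧
    ((x ⬝ᵥ o)⁻¹ • x ≠ (y ⬝ᵥ o)⁻¹ • y →
      ((x ⬝ᵥ o)⁻¹ • x) ⬝ᵥ B.mulVec ((y ⬝ᵥ o)⁻¹ • y) < 0) := by
  classical
  set U : Matrix (Fin n) (Fin n) ℝ := (hB.eigenvectorUnitary : Matrix (Fin n) (Fin n) ℝ) with hU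
  set f := hB.eigenvalues with hf
  have hUU' : U * star U = 1 := (Matrix.mem_unitaryGroup_iff).mp hB.eigenvectorUnitary.2
  have hUU : star U * U = 1 := (Matrix.mem_unitaryGroup_iff').mp hB.eigenvectorUnitary.2
  have hstar : star U = Uᵀ := by ext i j; simp [Matrix.star_apply]
  set co : (Fin n → ℝ) → (Fin n → ℝ) := fun v => star U *ᵥ v with hco
  have hF2 : ∀ v w : Fin n → ℝ, v ⬝ᵥ w = co v ⬝ᵥ co w := by
    intro v w
    simp only [hco]
    rw [dotProduct_mulVec, hstar, vecMul_transpose, mulVec_mulVec, ← hstar, hUU', one_mulVec]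
  have hspec : B = U * Matrix.diagonal f * star U := by
    have := hB.spectral_theorem
    simpa using this
  have hF1 : ∀ v w : Fin n → ℝ, v ⬝ᵥ B *ᵥ w = ∑ i, f i * co v i * co w i := by
    intro v w
    rw [congrArg (fun M => v ⬝ᵥ M *ᵥ w) hspec]
    rw [← mulVec_mulVec, ← mulVec_mulVec, dotProduct_mulVec, hstar, ← mulVec_transpose, ← hstar]
    simp [co, mulVec_diagonal, dotProduct, mul_comm, mul_assoc, mul_left_comm]
  have hinj : Function.Injective co := by
    intro v w h
    have := congrArg (fun z => U *ᵥ z) h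
    simpa [co, mulVec_mulVec, hUU'] using this
  have hsmul : ∀ (t : ℝ) (v : Fin n → ℝ), co (t • v) = t • co v := by
    intro t v; simp [co, mulVec_smul]
  -- eigenvalue structure
  obtain ⟨i₀, hi₀⟩ := Finset.card_eq_one.mp hneg
  have hfneg : f i₀ < 0 := by
    have : i₀ ∈ Finset.univ.filter (fun i => f i < 0) := by rw [hi₀]; simp
    simpa using this
  have hfpos : ∀ i, i ≠ i₀ → 0 < f i := by
    intro i hi
    have hdisj : Disjoint (Finset.univ.filter (fun i => f i < 0))
        (Finset.univ.filter (fun i => 0 < f i)) := by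
      rw [Finset.disjoint_filter]
      intro j _ h1 h2; linarith
    have hn1 : 1 ≤ n := by
      rcases Finset.card_eq_one.mp hneg with ⟨j, _⟩
      have := Fintype.card_pos_iff.mpr ⟨j⟩
      simp at this; omega
    have hcard : ((Finset.univ.filter (fun i => f i < 0)) ∪
        (Finset.univ.filter (fun i => 0 < f i))).card = n := by
      rw [Finset.card_union_of_disjoint hdisj, hneg, hpos]
      omega
    have huniv : (Finset.univ.filter (fun i => f i < 0)) ∪
        (Finset.univ.filter (fun i => 0 < f i)) = Finset.univ := by
      apply Finset.eq_univ_of_card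
      simpa using hcard
    have hi' : i ∈ (Finset.univ.filter (fun i => f i < 0)) ∪
        (Finset.univ.filter (fun i => 0 < f i)) := by rw [huniv]; exact Finset.mem_univ i
    rcases Finset.mem_union.mp hi' with h | h
    · exfalso; rw [hi₀] at h; simp at h; exact hi h
    · simpa using h
  -- the eigenvector o in coordinates
  set a := co o with ha
  have hDa : ∀ i, f i * a i = μ * a i := by
    have hkey : star U * B = Matrix.diagonal f * star U := by
      rw [congrArg (fun M => star U * M) hspec]
      rw [← Matrix.mul_assoc, ← Matrix.mul_assoc, hUU, Matrix.one_mul]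
    have h2 := congrArg (fun v => star U *ᵥ v) ho
    simp only [mulVec_mulVec, hkey, mulVec_smul] at h2
    rw [← mulVec_mulVec] at h2
    intro i
    have := congrFun h2 i
    simpa [co, mulVec_diagonal] using this
  have ha0 : ∀ i, i ≠ i₀ → a i = 0 := by
    intro i hi
    have h3 : (f i - μ) * a i = 0 := by linear_combination hDa i
    rcases mul_eq_zero.mp h3 with h | h
    · exfalso; have := hfpos i hi; linarith
    · exact h
  have ha1 : a i₀ * a i₀ = 1 := by
    have := hF2 o o
    rw [honorm] at this
    rw [dotProduct] at this
    rw [Finset.sum_eq_single i₀ (fun i _ hi => by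
      have h5 := ha0 i hi; rw [ha] at h5; rw [h5]; ring)
      (fun h => absurd (Finset.mem_univ i₀) h)] at this
    exact this.symm
  have hai₀ : a i₀ ≠ 0 := by
    intro h; rw [h] at ha1; simp at ha1
  -- dot with o in coordinates
  have hvo : ∀ v : Fin n → ℝ, v ⬝ᵥ o = co v i₀ * a i₀ := by
    intro v
    rw [hF2 v o, dotProduct]
    exact Finset.sum_eq_single i₀ (fun i _ hi => by
      have h5 := ha0 i hi; rw [ha] at h5; rw [h5]; ring)
      (fun h => absurd (Finset.mem_univ i₀) h)
  -- isotropic nonzero vectors have nonzero i₀ coordinate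
  have hiso : ∀ v : Fin n → ℝ, v ⬝ᵥ B *ᵥ v = 0 → v ≠ 0 → co v i₀ ≠ 0 := by
    intro v hv hv0 h0
    have hsum : ∑ i, f i * co v i * co v i = 0 := by rw [← hF1]; exact hv
    have hterm : ∀ i ∈ Finset.univ, (0:ℝ) ≤ f i * co v i * co v i := by
      intro i _
      by_cases hi : i = i₀
      · rw [hi, h0]; simp
      · have := hfpos i hi; nlinarith [sq_nonneg (co v i)]
    have hall := (Finset.sum_eq_zero_iff_of_nonneg hterm).mp hsum
    have hz : ∀ i, co v i = 0 := by
      intro i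
      by_cases hi : i = i₀
      · rw [hi]; exact h0
      · have h4 := hall i (Finset.mem_univ i)
        have hfi := hfpos i hi
        have h5 : f i * (co v i * co v i) = 0 := by linear_combination h4
        rcases mul_eq_zero.mp h5 with h | h
        · linarith
        · exact mul_self_eq_zero.mp h
    apply hv0
    apply hinj
    have : co v = co 0 := by
      funext i; rw [hz i]; simp [co, mulVec_zero]
    exact this
  set c := co x with hc
  set d := co y with hd
  have hci₀ : c i₀ ≠ 0 := hiso x hx hx0
  have hdi₀ : d i₀ ≠ 0 := hiso y hy hy0
  have hxo : x ⬝ᵥ o = c i₀ * a i₀ := hvo x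
  have hyo : y ⬝ᵥ o = d i₀ * a i₀ := hvo y
  have hxo0 : x ⬝ᵥ o ≠ 0 := by rw [hxo]; exact mul_ne_zero hci₀ hai₀
  have hyo0 : y ⬝ᵥ o ≠ 0 := by rw [hyo]; exact mul_ne_zero hdi₀ hai₀
  set α := (x ⬝ᵥ o)⁻¹ with hα
  set β := (y ⬝ᵥ o)⁻¹ with hβ
  have hα0 : α ≠ 0 := inv_ne_zero hxo0
  have hβ0 : β ≠ 0 := inv_ne_zero hyo0
  -- coordinates of normalized vectors agree at i₀
  have hnormi₀ : α * c i₀ = β * d i₀ := by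
    rw [hα, hβ, hxo, hyo]
    field_simp
  set e : Fin n → ℝ := fun i => α * c i - β * d i with he
  have hei₀ : e i₀ = 0 := by rw [he]; simp only; rw [hnormi₀]; ring
  set s := ∑ i, f i * (e i * e i) with hs
  have hsnn : 0 ≤ s := by
    apply Finset.sum_nonneg
    intro i _
    by_cases hi : i = i₀
    · rw [hi, hei₀]; simp
    · have := hfpos i hi; nlinarith [sq_nonneg (e i)]
  have hxx : ∑ i, f i * c i * c i = 0 := by rw [← hF1]; exact hx
  have hyy : ∑ i, f i * d i * d i = 0 := by rw [← hF1]; exact hy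
  have hBnorm : (α • x) ⬝ᵥ B *ᵥ (β • y) = α * β * ∑ i, f i * c i * d i := by
    rw [hF1, hsmul, hsmul, Finset.mul_sum]
    apply Finset.sum_congr rfl
    intro i _
    simp only [Pi.smul_apply, smul_eq_mul]
    ring
  have hBxy : x ⬝ᵥ B *ᵥ y = ∑ i, f i * c i * d i := hF1 x y
  have hskey : s = -2 * (α * β * ∑ i, f i * c i * d i) := by
    have expand : ∀ i : Fin n, f i * (e i * e i) = α^2*(f i * c i * c i)
        + β^2*(f i * d i * d i) - (2*α*β)*(f i * c i * d i) := by
      intro i; rw [he]; ring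
    have step : s = α^2 * (∑ i, f i * c i * c i) + β^2 * (∑ i, f i * d i * d i)
        - (2*α*β) * (∑ i, f i * c i * d i) := by
      rw [hs]
      rw [Finset.sum_congr rfl (fun i _ => expand i)]
      rw [Finset.sum_sub_distrib, Finset.sum_add_distrib, ← Finset.mul_sum, ← Finset.mul_sum,
        ← Finset.mul_sum]
    rw [step, hxx, hyy]; ring
  have hs0 : s = 0 ↔ α • x = β • y := by
    constructor
    · intro h
      have hterm : ∀ i ∈ Finset.univ, (0:ℝ) ≤ f i * (e i * e i) := by
        intro i _
        by_cases hi : i = i₀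
        · rw [hi, hei₀]; simp
        · have := hfpos i hi; nlinarith [sq_nonneg (e i)]
      have hall := (Finset.sum_eq_zero_iff_of_nonneg hterm).mp h
      apply hinj
      rw [hsmul, hsmul]
      funext i
      simp only [Pi.smul_apply, smul_eq_mul]
      by_cases hi : i = i₀
      · rw [hi]; exact hnormi₀
      · have h4 := hall i (Finset.mem_univ i)
        have hf' := hfpos i hi
        have : e i = 0 := by
          rcases mul_eq_zero.mp h4 with h' | h'
          · linarith
          · exact mul_self_eq_zero.mp h'
        rw [he] at this; simp only at this; linarith
    · intro h
      have hcoeq : α • c = β • d := by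
        rw [← hsmul, ← hsmul, h]
      have hez : ∀ i, e i = 0 := by
        intro i
        have := congrFun hcoeq i
        simp only [Pi.smul_apply, smul_eq_mul] at this
        rw [he]; simp only; linarith
      rw [hs]
      apply Finset.sum_eq_zero
      intro i _
      rw [hez i]; ring
  have hmain : (α • x) ⬝ᵥ B *ᵥ (β • y) = -(s/2) := by
    rw [hBnorm, hskey]; ring
  constructor
  · constructor
    · intro h
      apply hs0.mp
      have : α * β * ∑ i, f i * c i * d i = 0 := by
        rw [← hBxy] at *; rw [h]; ring
      linarith [hskey, this]
    · intro h
      have hs' : s = 0 := hs0.mpr h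
      have : α * β * ∑ i, f i * c i * d i = 0 := by
        have := hskey; rw [hs'] at this; linarith
      rw [hBxy]
      rcases mul_eq_zero.mp this with h' | h'
      · exact absurd h' (mul_ne_zero hα0 hβ0)
      · exact h'
  · intro h
    have hs' : s ≠ 0 := fun hz => h (hs0.mp hz)
    have : 0 < s := lt_of_le_of_ne hsnn (Ne.symm hs')
    rw [hmain]
    linarith
end

section
/- With B of signature (n−1,1) as above, for every x ∈ Q̂ and every simple root α ∈ Δ one has B(α, x) < 1/(2|α|₁). -/
open Matrix

lemma dot_inner {n : ℕ} (y z : Fin n → ℝ) :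
    @inner ℝ _ _ (WithLp.toLp 2 y) (WithLp.toLp 2 z) = y ⬝ᵥ z := by
  simp [PiLp.inner_apply, dotProduct, mul_comm]

lemma dot_symm' {n : ℕ} (B : Matrix (Fin n) (Fin n) ℝ) (hB : B.IsHermitian) (a c : Fin n → ℝ) :
    a ⬝ᵥ B.mulVec c = c ⬝ᵥ B.mulVec a := by
  have hsym : ∀ p q, B p q = B q p := fun p q => by
    conv_lhs => rw [← hB.eq]
    simp [conjTranspose_apply]
  simp only [dotProduct, mulVec, Finset.mul_sum]
  rw [Finset.sum_comm]
  refine Finset.sum_congr rfl fun k _ => Finset.sum_congr rfl fun j _ => ?_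
  rw [hsym j k]; ring

lemma psd_perp {n : ℕ} (B : Matrix (Fin n) (Fin n) ℝ) (hB : B.IsHermitian)
    (hneg : (Finset.univ.filter (fun i => hB.eigenvalues i < 0)).card = 1)
    (o : Fin n → ℝ) (μ : ℝ) (hμ : μ < 0) (ho : B.mulVec o = μ • o)
    (honorm : o ⬝ᵥ o = 1)
    (v : Fin n → ℝ) (hv : v ⬝ᵥ o = 0) : 0 ≤ v ⬝ᵥ B.mulVec v := by
  classical
  set b := hB.eigenvectorBasis with hb
  set lam := hB.eigenvalues with hlam
  have key : ∀ j, B.mulVec (b j) = lam j • (b j : Fin n → ℝ) := fun j =>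
    hB.mulVec_eigenvectorBasis j
  have hco : ∀ j (y : Fin n → ℝ), (b j : Fin n → ℝ) ⬝ᵥ B.mulVec y
      = lam j * ((b j : Fin n → ℝ) ⬝ᵥ y) := by
    intro j y
    rw [dot_symm' B hB, key j, dotProduct_smul, smul_eq_mul, dotProduct_comm]
  -- Parseval
  have pars : ∀ y z : Fin n → ℝ,
      ∑ j, ((b j : Fin n → ℝ) ⬝ᵥ y) * ((b j : Fin n → ℝ) ⬝ᵥ z) = y ⬝ᵥ z := by
    intro y z
    have := b.sum_inner_mul_inner (WithLp.toLp 2 y)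
      (WithLp.toLp 2 z)
    rw [dot_inner] at this
    rw [← this]
    refine Finset.sum_congr rfl fun j _ => ?_
    rw [real_inner_comm]
    rw [show @inner ℝ _ _ (b j) (WithLp.toLp 2 y)
      = (b j : Fin n → ℝ) ⬝ᵥ y from dot_inner _ _,
      show @inner ℝ _ _ (b j) (WithLp.toLp 2 z)
      = (b j : Fin n → ℝ) ⬝ᵥ z from dot_inner _ _]
  -- expansion of y in the basis
  have h1 : ∀ j : Fin n, b.repr (WithLp.toLp 2 v) j = (b j : Fin n → ℝ) ⬝ᵥ v := fun j => by
    rw [b.repr_apply_apply]; exact dot_inner _ _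
  have hy : v = ∑ j, ((b j : Fin n → ℝ) ⬝ᵥ v) • (b j : Fin n → ℝ) := by
    have h0 : (∑ j, b.repr (WithLp.toLp 2 v) j • (b j : Fin n → ℝ)) = v := by
      simpa using congrArg WithLp.ofLp (b.sum_repr (WithLp.toLp 2 v))
    conv_lhs => rw [← h0]
    exact Finset.sum_congr rfl fun j _ => by rw [h1 j]
  obtain ⟨j0, hj0⟩ := Finset.card_eq_one.mp hneg
  have hmem : ∀ j : Fin n, lam j < 0 ↔ j = j0 := by
    intro j
    constructor
    · intro h
      have hj : j ∈ Finset.univ.filter (fun i => lam i < 0) := by simp [h]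
      rw [hj0] at hj; simpa using hj
    · rintro rfl
      have hj : j ∈ ({j} : Finset (Fin n)) := Finset.mem_singleton_self _
      rw [← hj0] at hj; simpa using hj
  have hlampos : ∀ j, j ≠ j0 → 0 ≤ lam j := by
    intro j hj
    by_contra hcon
    push_neg at hcon
    exact hj ((hmem j).mp hcon)
  have ho_coef : ∀ j, j ≠ j0 → (b j : Fin n → ℝ) ⬝ᵥ o = 0 := by
    intro j hj
    have h2 : μ * ((b j : Fin n → ℝ) ⬝ᵥ o) = lam j * ((b j : Fin n → ℝ) ⬝ᵥ o) := by
      have h3 := hco j o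
      rw [ho, dotProduct_smul, smul_eq_mul] at h3
      exact h3
    rcases eq_or_ne ((b j : Fin n → ℝ) ⬝ᵥ o) 0 with h | h
    · exact h
    · exfalso
      have : μ = lam j := mul_right_cancel₀ h h2
      have := hlampos j hj
      linarith
  have parso : ∀ z : Fin n → ℝ,
      z ⬝ᵥ o = ((b j0 : Fin n → ℝ) ⬝ᵥ z) * ((b j0 : Fin n → ℝ) ⬝ᵥ o) := by
    intro z
    rw [← pars z o]
    exact Finset.sum_eq_single j0
      (fun j _ hj => by rw [ho_coef j hj, mul_zero])
      (fun h => absurd (Finset.mem_univ j0) h)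
  have hbo : (b j0 : Fin n → ℝ) ⬝ᵥ o ≠ 0 := by
    intro h0
    have h1' := parso o
    rw [honorm, h0, mul_zero] at h1'
    exact one_ne_zero h1'
  have hvj0 : (b j0 : Fin n → ℝ) ⬝ᵥ v = 0 := by
    have h1' := parso v
    rw [hv] at h1'
    rcases mul_eq_zero.mp h1'.symm with h | h
    · exact h
    · exact absurd h hbo
  have sum_dot : ∀ (f : Fin n → Fin n → ℝ) (w : Fin n → ℝ),
      (∑ j, f j) ⬝ᵥ w = ∑ j, f j ⬝ᵥ w := by
    intro f w
    simp only [dotProduct, Finset.sum_apply, Finset.sum_mul]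
    exact Finset.sum_comm
  have expand : v ⬝ᵥ B.mulVec v
      = ∑ j, ((b j : Fin n → ℝ) ⬝ᵥ v) * (lam j * ((b j : Fin n → ℝ) ⬝ᵥ v)) := by
    calc v ⬝ᵥ B.mulVec v
        = (∑ j, ((b j : Fin n → ℝ) ⬝ᵥ v) • (b j : Fin n → ℝ)) ⬝ᵥ B.mulVec v :=
          congrArg (· ⬝ᵥ B.mulVec v) hy
      _ = ∑ j, ((b j : Fin n → ℝ) ⬝ᵥ v) * ((b j : Fin n → ℝ) ⬝ᵥ B.mulVec v) := by
          rw [sum_dot]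
          exact Finset.sum_congr rfl fun j _ => by rw [smul_dotProduct, smul_eq_mul]
      _ = ∑ j, ((b j : Fin n → ℝ) ⬝ᵥ v) * (lam j * ((b j : Fin n → ℝ) ⬝ᵥ v)) :=
          Finset.sum_congr rfl fun j _ => by rw [hco]
  rw [expand]
  refine Finset.sum_nonneg fun j _ => ?_
  rcases eq_or_ne j j0 with rfl | hj
  · rw [hvj0]; simp
  · have h4 := hlampos j hj
    nlinarith [sq_nonneg ((b j : Fin n → ℝ) ⬝ᵥ v)]

/-- For a Coxeter bilinear form of signature `(n-1,1)`, every point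
`x ∈ Q̂` and every simple root `αᵢ` (standard basis vector, with `|αᵢ|₁ = o i > 0`)
satisfy `B(αᵢ, x) < 1/(2|αᵢ|₁)`. -/
theorem stmt5 (n : ℕ) (B : Matrix (Fin n) (Fin n) ℝ) (hB : B.IsHermitian)
    (hdiag : ∀ i, B i i = 1)
    (hoff : ∀ i j, i ≠ j → B i j ≤ 0)
    (hneg : (Finset.univ.filter (fun i => hB.eigenvalues i < 0)).card = 1)
    (hpos : (Finset.univ.filter (fun i => 0 < hB.eigenvalues i)).card = n - 1)
    (o : Fin n → ℝ) (μ : ℝ) (hμ : μ < 0) (ho : B.mulVec o = μ • o)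
    (honorm : o ⬝ᵥ o = 1) (hopos : ∀ i, 0 < o i)
    (x : Fin n → ℝ) (hxQ : x ⬝ᵥ B.mulVec x = 0) (hx1 : x ⬝ᵥ o = 1)
    (i : Fin n) :
    B.mulVec x i < 1 / (2 * o i) := by
  classical
  have ht : 0 < o i := hopos i
  set t := o i with htdef
  set c := B.mulVec x i with hcdef
  set e : Fin n → ℝ := Pi.single i 1 with hedef
  -- basic values of the bilinear form
  have heo : e ⬝ᵥ o = t := by rw [hedef, single_dotProduct, one_mul]
  have hee : e ⬝ᵥ B.mulVec e = 1 := by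
    rw [hedef, mulVec_single, single_dotProduct]
    simp [hdiag i]
  have heBx : e ⬝ᵥ B.mulVec x = c := by
    rw [hedef, single_dotProduct, one_mul, hcdef]
  have hxBe : x ⬝ᵥ B.mulVec e = c := by rw [dot_symm' B hB, heBx]
  have heBo : e ⬝ᵥ B.mulVec o = μ * t := by
    rw [ho, dotProduct_smul, smul_eq_mul, heo]
  have hoBe : o ⬝ᵥ B.mulVec e = μ * t := by rw [dot_symm' B hB, heBo]
  have hoBo : o ⬝ᵥ B.mulVec o = μ := by
    rw [ho, dotProduct_smul, smul_eq_mul, honorm, mul_one]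
  have hxBo : x ⬝ᵥ B.mulVec o = μ := by
    rw [ho, dotProduct_smul, smul_eq_mul, hx1, mul_one]
  have hoBx : o ⬝ᵥ B.mulVec x = μ := by rw [dot_symm' B hB, hxBo]
  -- auxiliary quantities
  have hA : (0:ℝ) < 1 - μ * t ^ 2 := by nlinarith
  set s : ℝ := (1 / (2 * t) - μ * t) / (1 - μ * t ^ 2) with hsdef
  set q : Fin n → ℝ := s • (e - t • o) - (x - o) with hqdef
  have hqo : q ⬝ᵥ o = 0 := by
    rw [hqdef]
    simp only [sub_dotProduct, smul_dotProduct, smul_eq_mul, heo, honorm, hx1]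
    ring
  have h0 := psd_perp B hB hneg o μ hμ ho honorm q hqo
  have hexp : q ⬝ᵥ B.mulVec q
      = s ^ 2 * (1 - μ * t ^ 2) - 2 * s * (c - μ * t) - μ := by
    rw [hqdef]
    simp only [mulVec_sub, mulVec_smul, sub_dotProduct, dotProduct_sub, smul_dotProduct,
      dotProduct_smul, smul_eq_mul, hee, heBx, hxBe, heBo, hoBe, hoBo, hxBo, hoBx, hxQ]
    ring
  rw [hexp] at h0
  -- clear denominators
  have hN : 0 < 1 / (2 * t) - μ * t := by
    have h1 : (0:ℝ) < 1 / (2 * t) := by positivity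
    nlinarith
  have hsA : s * (1 - μ * t ^ 2) = 1 / (2 * t) - μ * t :=
    div_mul_cancel₀ _ hA.ne'
  have h0' : 0 ≤ (1 / (2 * t) - μ * t) ^ 2
      - 2 * (1 / (2 * t) - μ * t) * (c - μ * t) - μ * (1 - μ * t ^ 2) := by
    have h3 := mul_nonneg hA.le h0
    have e1 : (1 - μ * t ^ 2) * (s ^ 2 * (1 - μ * t ^ 2) - 2 * s * (c - μ * t) - μ)
        = (s * (1 - μ * t ^ 2)) ^ 2 - 2 * (s * (1 - μ * t ^ 2)) * (c - μ * t)
          - μ * (1 - μ * t ^ 2) := by ring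
    rw [e1, hsA] at h3
    exact h3
  have hr : (1 / (2 * t)) * (2 * t) = 1 := by
    field_simp
  by_contra hc
  push_neg at hc
  nlinarith [h0', hr, ht, hμ, hN, mul_nonneg (sub_nonneg.2 hc) hN.le, sq_nonneg (1 / (2 * t))]
end

section
/- Under the normalized action, for a simple root α and points x, y in the visible area V_α := {z ∈ Q̂ : B(α,z) ≥ 0}, one has |B(s_α · x, s_α · y)| ≥ |B(x,y)|, with strict inequality whenever x ∉ ∂V_α or y ∉ ∂V_α (i.e., B(α,x) > 0 or B(α,y) > 0). -/
open Matrix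

lemma aux_pd (n : ℕ) (B : Matrix (Fin n) (Fin n) ℝ) (hB : B.IsHermitian)
    (hneg : (Finset.univ.filter (fun i => hB.eigenvalues i < 0)).card = 1)
    (hpos : (Finset.univ.filter (fun i => 0 < hB.eigenvalues i)).card = n - 1)
    (o : Fin n → ℝ) (μ : ℝ) (hμ : μ < 0) (ho : B.mulVec o = μ • o)
    (honorm : o ⬝ᵥ o = 1)
    (v : Fin n → ℝ) (hvo : v ⬝ᵥ o = 0) (hv : v ≠ 0) :
    0 < v ⬝ᵥ B.mulVec v := by
  classical
  set b := hB.eigenvectorBasis with hb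
  set lam := hB.eigenvalues with hlam
  set T : (Fin n → ℝ) → Fin n → ℝ := fun w j => (b j : Fin n → ℝ) ⬝ᵥ w with hT
  have hinner : ∀ u w : Fin n → ℝ,
      (inner (𝕜 := ℝ) (E := EuclideanSpace ℝ (Fin n)) (WithLp.toLp 2 u) (WithLp.toLp 2 w)) = u ⬝ᵥ w := by
    intro u w
    simp [PiLp.inner_apply, dotProduct, RCLike.inner_apply, mul_comm]
  have hrepr : ∀ (u : Fin n → ℝ) (j : Fin n), b.repr (WithLp.toLp 2 u) j = T u j := by
    intro u j
    rw [b.repr_apply_apply]; exact hinner _ _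
  have parseval : ∀ u w : Fin n → ℝ, u ⬝ᵥ w = ∑ j, T u j * T w j := by
    intro u w
    calc u ⬝ᵥ w = inner (𝕜 := ℝ) (E := EuclideanSpace ℝ (Fin n)) (WithLp.toLp 2 u) (WithLp.toLp 2 w) := (hinner u w).symm
      _ = inner (𝕜 := ℝ) (b.repr (WithLp.toLp 2 u)) (b.repr (WithLp.toLp 2 w)) := (b.repr.inner_map_map _ _).symm
      _ = (b.repr (WithLp.toLp 2 u)).ofLp ⬝ᵥ (b.repr (WithLp.toLp 2 w)).ofLp := hinner _ _
      _ = ∑ j, T u j * T w j := by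
          refine Finset.sum_congr rfl fun j _ => ?_
          rw [hrepr, hrepr]
  have hmul : ∀ j : Fin n, B.mulVec (b j : Fin n → ℝ) = lam j • (b j : Fin n → ℝ) :=
    fun j => hB.mulVec_eigenvectorBasis j
  have hT2 : ∀ (w : Fin n → ℝ) (j : Fin n), T (B.mulVec w) j = lam j * T w j := by
    intro w j
    have hBt : Bᵀ = B := by
      ext p q; have := congrFun (congrFun hB p) q
      simpa [Matrix.conjTranspose_apply] using this
    have h1 : (b j : Fin n → ℝ) ⬝ᵥ (B.mulVec w) = (B.mulVec (b j : Fin n → ℝ)) ⬝ᵥ w := by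
      rw [Matrix.dotProduct_mulVec]
      congr 1
      rw [← Matrix.mulVec_transpose, hBt]
    show (b j : Fin n → ℝ) ⬝ᵥ (B.mulVec w) = lam j * T w j
    rw [h1, hmul, smul_dotProduct]
    rfl
  obtain ⟨j0, hj0⟩ := Finset.card_eq_one.mp hneg
  have hlj0 : lam j0 < 0 := by
    have : j0 ∈ Finset.univ.filter (fun i => lam i < 0) := by
      rw [hj0]; exact Finset.mem_singleton_self j0
    simpa using (Finset.mem_filter.mp this).2
  have hunion : (Finset.univ.filter (fun i => lam i < 0)) ∪
      (Finset.univ.filter (fun i => 0 < lam i)) = Finset.univ := by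
    apply Finset.eq_univ_of_card
    rw [Finset.card_union_of_disjoint]
    · rw [hneg, hpos]
      have hn1 : 1 ≤ n := j0.pos
      simp [Finset.card_univ]; omega
    · rw [Finset.disjoint_filter]
      intro a _ h1 h2; linarith
  have hposj : ∀ j, j ≠ j0 → 0 < lam j := by
    intro j hj
    have : j ∈ (Finset.univ.filter (fun i => lam i < 0)) ∪
        (Finset.univ.filter (fun i => 0 < lam i)) := by
      rw [hunion]; exact Finset.mem_univ j
    rcases Finset.mem_union.mp this with h | h
    · rw [hj0] at h; exact absurd (Finset.mem_singleton.mp h) hj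
    · simpa using (Finset.mem_filter.mp h).2
  have hTo : ∀ j, j ≠ j0 → T o j = 0 := by
    intro j hj
    have h1 : lam j * T o j = μ * T o j := by
      rw [← hT2 o j, ho, hT]
      simp only
      rw [dotProduct_smul]
      rfl
    have h2 : (lam j - μ) * T o j = 0 := by nlinarith [h1]
    have h3 : lam j - μ ≠ 0 := by have := hposj j hj; intro h; linarith
    exact (mul_eq_zero.mp h2).resolve_left h3
  have hToj0 : T o j0 ≠ 0 := by
    intro h
    have hp := parseval o o
    rw [honorm] at hp
    have hz : ∑ j, T o j * T o j = 0 := by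
      apply Finset.sum_eq_zero
      intro j _
      by_cases hj : j = j0
      · rw [hj, h]; ring
      · rw [hTo j hj]; ring
    rw [hz] at hp; norm_num at hp
  have hTv0 : T v j0 = 0 := by
    have h1 : (0:ℝ) = ∑ j, T v j * T o j := by rw [← parseval, hvo]
    have h2 : ∑ j, T v j * T o j = T v j0 * T o j0 := by
      apply Finset.sum_eq_single
      · intro j _ hj; rw [hTo j hj]; ring
      · intro h; exact absurd (Finset.mem_univ j0) h
    rcases mul_eq_zero.mp (h1.trans h2).symm with h | h
    · exact h
    · exact absurd h hToj0
  have hvv : 0 < v ⬝ᵥ v := by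
    have h0 : v ⬝ᵥ v = ∑ i, v i * v i := rfl
    obtain ⟨k, hk⟩ := Function.ne_iff.mp hv
    rw [h0]
    apply Finset.sum_pos'
    · intro j _; exact mul_self_nonneg _
    · exact ⟨k, Finset.mem_univ k, mul_self_pos.mpr hk⟩
  have hTvne : ∃ j, T v j ≠ 0 := by
    by_contra h
    push_neg at h
    rw [parseval v v] at hvv
    have : ∑ j, T v j * T v j = 0 := Finset.sum_eq_zero fun j _ => by rw [h j]; ring
    linarith
  obtain ⟨k, hk⟩ := hTvne
  have hkj0 : k ≠ j0 := fun h => hk (h ▸ hTv0)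
  have hfinal : v ⬝ᵥ B.mulVec v = ∑ j, lam j * (T v j * T v j) := by
    rw [parseval v (B.mulVec v)]
    refine Finset.sum_congr rfl fun j _ => ?_
    rw [hT2]; ring
  rw [hfinal]
  apply Finset.sum_pos'
  · intro j _
    by_cases hj : j = j0
    · rw [hj, hTv0]; simp
    · exact mul_nonneg (le_of_lt (hposj j hj)) (mul_self_nonneg _)
  · exact ⟨k, Finset.mem_univ k, mul_pos (hposj k hkj0) (mul_self_pos.mpr hk)⟩

lemma aux_psd (n : ℕ) (B : Matrix (Fin n) (Fin n) ℝ) (hB : B.IsHermitian)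
    (hneg : (Finset.univ.filter (fun i => hB.eigenvalues i < 0)).card = 1)
    (hpos : (Finset.univ.filter (fun i => 0 < hB.eigenvalues i)).card = n - 1)
    (o : Fin n → ℝ) (μ : ℝ) (hμ : μ < 0) (ho : B.mulVec o = μ • o)
    (honorm : o ⬝ᵥ o = 1)
    (v : Fin n → ℝ) (hvo : v ⬝ᵥ o = 0) : 0 ≤ v ⬝ᵥ B.mulVec v := by
  by_cases hv : v = 0
  · simp [hv]
  · exact le_of_lt (aux_pd n B hB hneg hpos o μ hμ ho honorm v hvo hv)

set_option maxHeartbeats 1000000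

/-- For distinct `x, y` in the visible area `V_α = {z ∈ Q̂ : B(α,z) ≥ 0}`
of a simple root `α = eᵢ`, the normalized reflection does not decrease `|B(·,·)|`:
`|B(s_α·x, s_α·y)| ≥ |B(x,y)|`, strictly whenever `B(α,x) > 0` or `B(α,y) > 0`. -/
theorem stmt7 (n : ℕ) (B : Matrix (Fin n) (Fin n) ℝ) (hB : B.IsHermitian)
    (hdiag : ∀ i, B i i = 1)
    (hoff : ∀ i j, i ≠ j → B i j ≤ 0)
    (hneg : (Finset.univ.filter (fun i => hB.eigenvalues i < 0)).card = 1)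
    (hpos : (Finset.univ.filter (fun i => 0 < hB.eigenvalues i)).card = n - 1)
    (o : Fin n → ℝ) (μ : ℝ) (hμ : μ < 0) (ho : B.mulVec o = μ • o)
    (honorm : o ⬝ᵥ o = 1) (hopos : ∀ i, 0 < o i)
    (i : Fin n) (x y : Fin n → ℝ)
    (hxQ : x ⬝ᵥ B.mulVec x = 0) (hx1 : x ⬝ᵥ o = 1)
    (hyQ : y ⬝ᵥ B.mulVec y = 0) (hy1 : y ⬝ᵥ o = 1)
    (hxy : x ≠ y)
    (hx : 0 ≤ B.mulVec x i) (hy : 0 ≤ B.mulVec y i) :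
    let sx := x - (2 * B.mulVec x i) • (Pi.single i (1:ℝ) : Fin n → ℝ)
    let sy := y - (2 * B.mulVec y i) • (Pi.single i (1:ℝ) : Fin n → ℝ)
    let nx := (sx ⬝ᵥ o)⁻¹ • sx
    let ny := (sy ⬝ᵥ o)⁻¹ • sy
    |x ⬝ᵥ B.mulVec y| ≤ |nx ⬝ᵥ B.mulVec ny| ∧
    ((0 < B.mulVec x i ∨ 0 < B.mulVec y i) →
      |x ⬝ᵥ B.mulVec y| < |nx ⬝ᵥ B.mulVec ny|) := by
  intro sx sy nx ny
  have hBt : Bᵀ = B := by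
    ext p q; have := congrFun (congrFun hB p) q
    simpa [Matrix.conjTranspose_apply] using this
  have hsymm : ∀ a c : Fin n → ℝ, a ⬝ᵥ B.mulVec c = c ⬝ᵥ B.mulVec a := by
    intro a c
    rw [Matrix.dotProduct_mulVec, dotProduct_comm]
    congr 1
    rw [← Matrix.mulVec_transpose, hBt]
  have hxyneg : x ⬝ᵥ B.mulVec y < 0 := by
    have hv0 : (x - y) ⬝ᵥ o = 0 := by
      rw [sub_dotProduct, hx1, hy1]; ring
    have hvne : x - y ≠ 0 := sub_ne_zero_of_ne hxy
    have hp := aux_pd n B hB hneg hpos o μ hμ ho honorm (x - y) hv0 hvne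
    have hexp : (x - y) ⬝ᵥ B.mulVec (x - y) = -2 * (x ⬝ᵥ B.mulVec y) := by
      rw [Matrix.mulVec_sub, sub_dotProduct, dotProduct_sub,
        dotProduct_sub, hxQ, hyQ, hsymm y x]
      ring
    rw [hexp] at hp
    linarith
  have hhalf : ∀ z : Fin n → ℝ, z ⬝ᵥ B.mulVec z = 0 → z ⬝ᵥ o = 1 →
      2 * B.mulVec z i * o i < 1 := by
    intro z hzQ hz1
    set w : Fin n → ℝ := z - o with hw
    set u : Fin n → ℝ := Pi.single i 1 - (o i) • o with hu
    have hoBo : o ⬝ᵥ B.mulVec o = μ := by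
      rw [ho, dotProduct_smul, honorm, smul_eq_mul]; ring
    have hzBo : z ⬝ᵥ B.mulVec o = μ := by
      rw [ho, dotProduct_smul, hz1, smul_eq_mul]; ring
    have heBo : (Pi.single i 1 : Fin n → ℝ) ⬝ᵥ B.mulVec o = μ * o i := by
      rw [ho, dotProduct_smul, single_dotProduct, smul_eq_mul]; ring
    have heBe : (Pi.single i 1 : Fin n → ℝ) ⬝ᵥ B.mulVec (Pi.single i 1) = 1 := by
      rw [single_dotProduct]
      rw [show (B.mulVec (Pi.single i 1)) i = B i i by
        rw [Matrix.mulVec_single]; simp]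
      rw [hdiag]; ring
    have hwo : w ⬝ᵥ o = 0 := by
      rw [hw, sub_dotProduct, hz1, honorm]; ring
    have huo : u ⬝ᵥ o = 0 := by
      rw [hu, sub_dotProduct, smul_dotProduct,
        single_dotProduct, honorm, smul_eq_mul]; ring
    have hwBw : w ⬝ᵥ B.mulVec w = -μ := by
      rw [hw, Matrix.mulVec_sub, sub_dotProduct, dotProduct_sub,
        dotProduct_sub, hzQ, hzBo, hoBo, hsymm o z, hzBo]
      ring
    have huBu : u ⬝ᵥ B.mulVec u = 1 - μ * (o i) ^ 2 := by
      rw [hu]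
      simp only [Matrix.mulVec_sub, Matrix.mulVec_smul, sub_dotProduct,
        dotProduct_sub, smul_dotProduct, dotProduct_smul,
        smul_eq_mul]
      rw [heBe, heBo, hoBo, hsymm o (Pi.single i 1), heBo]
      ring
    set s : ℝ := w ⬝ᵥ B.mulVec u with hs
    have huBw : u ⬝ᵥ B.mulVec w = s := (hsymm u w).trans hs.symm
    have hoBu : o ⬝ᵥ B.mulVec u = 0 := by
      rw [hsymm, ho, dotProduct_smul, huo, smul_eq_mul]; ring
    have hwBo : w ⬝ᵥ B.mulVec o = 0 := by
      rw [ho, dotProduct_smul, hwo, smul_eq_mul]; ring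
    have hc : B.mulVec z i = μ * o i + s := by
      have h1 : z ⬝ᵥ B.mulVec (Pi.single i 1) = B.mulVec z i := by
        rw [hsymm, single_dotProduct]; ring
      have hz' : z = o + w := by rw [hw]; abel
      have he' : (Pi.single i 1 : Fin n → ℝ) = (o i) • o + u := by rw [hu]; abel
      rw [← h1]
      conv_lhs => rw [hz', he']
      simp only [Matrix.mulVec_add, Matrix.mulVec_smul, add_dotProduct,
        dotProduct_add, dotProduct_smul, smul_eq_mul]
      rw [hoBo, hoBu, hwBo, ← hs]
      ring
    set q : ℝ := 1 - μ * (o i) ^ 2 with hqdef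
    have hq : 0 < q := by
      have := hopos i
      nlinarith [sq_nonneg (o i)]
    have hCS : s ^ 2 ≤ (-μ) * q := by
      obtain ⟨t, ht⟩ : ∃ t : ℝ, t = -s / q := ⟨_, rfl⟩
      have hvo' : (w + t • u) ⬝ᵥ o = 0 := by
        rw [add_dotProduct, smul_dotProduct, hwo, huo, smul_eq_mul]; ring
      have hpsd := aux_psd n B hB hneg hpos o μ hμ ho honorm (w + t • u) hvo'
      have hexp : (w + t • u) ⬝ᵥ B.mulVec (w + t • u) = -μ + 2 * t * s + t ^ 2 * q := by
        simp only [Matrix.mulVec_add, Matrix.mulVec_smul, add_dotProduct,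
          dotProduct_add, smul_dotProduct, dotProduct_smul,
          smul_eq_mul]
        rw [hwBw, huBu, huBw]
        ring
      rw [hexp] at hpsd
      have hq' : q ≠ 0 := ne_of_gt hq
      have h9 : q * (-μ) - s ^ 2 = q * (-μ + 2 * t * s + t ^ 2 * q) := by
        rw [ht]; field_simp; ring
      have h11 : 0 ≤ q * (-μ + 2 * t * s + t ^ 2 * q) := mul_nonneg hq.le hpsd
      rw [← h9] at h11
      linarith
    rw [hc]
    set a : ℝ := o i with ha
    have ha0 : 0 < a := hopos i
    have hm0 : 0 < -μ := by linarith
    have hCS' : s ^ 2 ≤ -μ + μ ^ 2 * a ^ 2 := by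
      have e : (-μ) * q = -μ + μ ^ 2 * a ^ 2 := by rw [hqdef]; ring
      linarith [hCS]
    have key : 2 * s * a < 1 + 2 * (-μ) * a ^ 2 := by
      by_cases hsn : s ≤ 0
      · nlinarith
      · push_neg at hsn
        have h4 : (2 * s * a) ^ 2 ≤ (1 + 2 * (-μ) * a ^ 2) ^ 2 - 1 := by nlinarith
        have h5 : (2 * s * a) ^ 2 < (1 + 2 * (-μ) * a ^ 2) ^ 2 := by nlinarith
        have h6 : (0:ℝ) ≤ 1 + 2 * (-μ) * a ^ 2 := by nlinarith
        exact lt_of_pow_lt_pow_left₀ 2 h6 h5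
    nlinarith [key]
  have hpxval : sx ⬝ᵥ o = 1 - 2 * B.mulVec x i * o i := by
    show (x - (2 * B.mulVec x i) • (Pi.single i (1:ℝ) : Fin n → ℝ)) ⬝ᵥ o = _
    rw [sub_dotProduct, smul_dotProduct, single_dotProduct,
      hx1, smul_eq_mul]
    ring
  have hpyval : sy ⬝ᵥ o = 1 - 2 * B.mulVec y i * o i := by
    show (y - (2 * B.mulVec y i) • (Pi.single i (1:ℝ) : Fin n → ℝ)) ⬝ᵥ o = _
    rw [sub_dotProduct, smul_dotProduct, single_dotProduct,
      hy1, smul_eq_mul]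
    ring
  have hpx0 : 0 < sx ⬝ᵥ o := by rw [hpxval]; linarith [hhalf x hxQ hx1]
  have hpy0 : 0 < sy ⬝ᵥ o := by rw [hpyval]; linarith [hhalf y hyQ hy1]
  have hpx1 : sx ⬝ᵥ o ≤ 1 := by
    rw [hpxval]
    nlinarith [hopos i, hx]
  have hpy1 : sy ⬝ᵥ o ≤ 1 := by
    rw [hpyval]
    nlinarith [hopos i, hy]
  have hinv : sx ⬝ᵥ B.mulVec sy = x ⬝ᵥ B.mulVec y := by
    have hxBe : x ⬝ᵥ B.mulVec (Pi.single i 1) = B.mulVec x i := by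
      rw [hsymm, single_dotProduct]; ring
    have heBy : (Pi.single i 1 : Fin n → ℝ) ⬝ᵥ B.mulVec y = B.mulVec y i := by
      rw [single_dotProduct]; ring
    have heBe : (Pi.single i 1 : Fin n → ℝ) ⬝ᵥ B.mulVec (Pi.single i 1) = 1 := by
      rw [single_dotProduct]
      rw [show (B.mulVec (Pi.single i 1)) i = B i i by
        rw [Matrix.mulVec_single]; simp]
      rw [hdiag]; ring
    show (x - (2 * B.mulVec x i) • (Pi.single i (1:ℝ) : Fin n → ℝ)) ⬝ᵥ
      B.mulVec (y - (2 * B.mulVec y i) • (Pi.single i (1:ℝ) : Fin n → ℝ)) = _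
    simp only [Matrix.mulVec_sub, Matrix.mulVec_smul, sub_dotProduct,
      dotProduct_sub, smul_dotProduct, dotProduct_smul,
      smul_eq_mul]
    rw [hxBe, heBy, heBe]
    ring
  have hval : nx ⬝ᵥ B.mulVec ny = (x ⬝ᵥ B.mulVec y) / ((sx ⬝ᵥ o) * (sy ⬝ᵥ o)) := by
    show ((sx ⬝ᵥ o)⁻¹ • sx) ⬝ᵥ B.mulVec ((sy ⬝ᵥ o)⁻¹ • sy) = _
    rw [smul_dotProduct, Matrix.mulVec_smul, dotProduct_smul, hinv,
      smul_eq_mul, smul_eq_mul]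
    rw [div_eq_mul_inv, mul_inv]
    ring
  have habs : |nx ⬝ᵥ B.mulVec ny| = |x ⬝ᵥ B.mulVec y| / ((sx ⬝ᵥ o) * (sy ⬝ᵥ o)) := by
    rw [hval, abs_div, abs_of_pos (mul_pos hpx0 hpy0)]
  have hq0 : 0 < |x ⬝ᵥ B.mulVec y| := abs_pos.mpr (ne_of_lt hxyneg)
  constructor
  · rw [habs, le_div_iff₀ (mul_pos hpx0 hpy0)]
    have h1 : (sx ⬝ᵥ o) * (sy ⬝ᵥ o) ≤ 1 := mul_le_one₀ hpx1 (le_of_lt hpy0) hpy1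
    calc |x ⬝ᵥ B.mulVec y| * ((sx ⬝ᵥ o) * (sy ⬝ᵥ o)) ≤ |x ⬝ᵥ B.mulVec y| * 1 :=
          mul_le_mul_of_nonneg_left h1 (abs_nonneg _)
      _ = |x ⬝ᵥ B.mulVec y| := mul_one _
  · intro h
    have hlt1 : (sx ⬝ᵥ o) * (sy ⬝ᵥ o) < 1 := by
      rcases h with h | h
      · have h2 : sx ⬝ᵥ o < 1 := by rw [hpxval]; nlinarith [hopos i]
        nlinarith
      · have h2 : sy ⬝ᵥ o < 1 := by rw [hpyval]; nlinarith [hopos i]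
        nlinarith
    rw [habs, lt_div_iff₀ (mul_pos hpx0 hpy0)]
    exact mul_lt_of_lt_one_right hq0 hlt1
end

section
/- With notation as above (T = min_α 1/(1−2C|α|₁) > 1), for x ∈ U_α = {v ∈ Q̂ : B(α,v) > C} and y ∈ V_α = {v ∈ Q̂ : B(α,v) ≥ 0}, one has |B(s_α · x, y)| ≥ T·|B(x,y)|. -/
open Matrix

private lemma symdot {n : ℕ} {B : Matrix (Fin n) (Fin n) ℝ} (hB : B.IsHermitian)
    (a b : Fin n → ℝ) : a ⬝ᵥ B *ᵥ b = b ⬝ᵥ B *ᵥ a := by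
  rw [Matrix.dotProduct_mulVec, ← Matrix.mulVec_transpose, dotProduct_comm,
    ← Matrix.conjTranspose_eq_transpose_of_trivial, hB.eq]

private lemma posdef_perp {n : ℕ} {B : Matrix (Fin n) (Fin n) ℝ} (hB : B.IsHermitian)
    (hneg : (Finset.univ.filter (fun i => hB.eigenvalues i < 0)).card = 1)
    (hpos : (Finset.univ.filter (fun i => 0 < hB.eigenvalues i)).card = n - 1)
    {o : Fin n → ℝ} {μ : ℝ} (hμ : μ < 0) (ho : B.mulVec o = μ • o)
    (honorm : o ⬝ᵥ o = 1)
    {w : Fin n → ℝ} (hwo : w ⬝ᵥ o = 0) (hw : w ≠ 0) :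
    0 < w ⬝ᵥ B.mulVec w := by
  classical
  set U : Matrix (Fin n) (Fin n) ℝ := (hB.eigenvectorUnitary : Matrix (Fin n) (Fin n) ℝ) with hUdef
  have hUmem := (hB.eigenvectorUnitary).2
  have hU1 : star U * U = 1 := hUmem.1
  have hU2 : U * star U = 1 := hUmem.2
  set lam := hB.eigenvalues with hlam
  have hspec : B = U * diagonal lam * star U := by
    have := hB.spectral_theorem
    simpa [Function.comp] using this
  -- invariance of dot product
  have key : ∀ a b : Fin n → ℝ, (star U *ᵥ a) ⬝ᵥ (star U *ᵥ b) = a ⬝ᵥ b := by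
    intro a b
    rw [Matrix.dotProduct_mulVec, vecMul_mulVec, Matrix.star_eq_conjTranspose,
      Matrix.conjTranspose_eq_transpose_of_trivial, Matrix.transpose_transpose,
      ← Matrix.conjTranspose_eq_transpose_of_trivial U, ← Matrix.star_eq_conjTranspose, hU2,
      Matrix.vecMul_one]
  set c : Fin n → ℝ := star U *ᵥ w with hc
  set e : Fin n → ℝ := star U *ᵥ o with he
  -- quadratic form in coordinates
  have hform : ∀ a : Fin n → ℝ, a ⬝ᵥ B *ᵥ a
      = ∑ k, lam k * ((star U *ᵥ a) k)^2 := by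
    intro a
    have h1 : B *ᵥ a = U *ᵥ (diagonal lam *ᵥ (star U *ᵥ a)) := by
      rw [hspec, mulVec_mulVec, mulVec_mulVec]
    have h2 : a ⬝ᵥ B *ᵥ a = (star U *ᵥ a) ⬝ᵥ (diagonal lam *ᵥ (star U *ᵥ a)) := by
      rw [h1]
      have := key a (U *ᵥ (diagonal lam *ᵥ (star U *ᵥ a)))
      rw [← this, mulVec_mulVec, hU1, one_mulVec]
    rw [h2, dotProduct]
    exact Finset.sum_congr rfl fun k _ => by rw [Matrix.mulVec_diagonal]; ring
  -- eigen equation in coordinates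
  have heig : ∀ k, lam k * e k = μ * e k := by
    intro k
    have h1 : diagonal lam *ᵥ e = μ • e := by
      have : star U *ᵥ (B *ᵥ o) = star U *ᵥ (μ • o) := by rw [ho]
      rw [Matrix.mulVec_smul] at this
      rw [hspec] at this
      rw [mulVec_mulVec, ← Matrix.mul_assoc, ← Matrix.mul_assoc, hU1,
        Matrix.one_mul, ← mulVec_mulVec] at this
      exact this
    have := congrFun h1 k
    simpa [Matrix.mulVec_diagonal] using this
  -- the unique negative index
  obtain ⟨k0, hk0⟩ := Finset.card_eq_one.mp hneg
  have hk0neg : lam k0 < 0 := by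
    have : k0 ∈ Finset.univ.filter (fun i => hB.eigenvalues i < 0) := by
      rw [hk0]; exact Finset.mem_singleton_self _
    simpa using this
  have hpos' : ∀ k, k ≠ k0 → 0 < lam k := by
    intro k hk
    by_contra hnp
    push_neg at hnp
    have hkneg : lam k < 0 := by
      rcases lt_trichotomy (lam k) 0 with h | h | h
      · exact h
      · exfalso
        -- lam k = 0 : impossible by cardinality count
        have hn1 : 1 ≤ n := Nat.one_le_iff_ne_zero.mpr (by rintro rfl; exact k.elim0)
        have hdisj : Disjoint (Finset.univ.filter (fun i => hB.eigenvalues i < 0))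
            (Finset.univ.filter (fun i => 0 < hB.eigenvalues i)) := by
          rw [Finset.disjoint_filter]
          intro a _ h1 h2
          exact absurd h2 (not_lt.mpr h1.le)
        have hcard : ((Finset.univ.filter (fun i => hB.eigenvalues i < 0)) ∪
            (Finset.univ.filter (fun i => 0 < hB.eigenvalues i))).card = n := by
          rw [Finset.card_union_of_disjoint hdisj, hneg, hpos]
          omega
        have huniv : ((Finset.univ.filter (fun i => hB.eigenvalues i < 0)) ∪
            (Finset.univ.filter (fun i => 0 < hB.eigenvalues i))) = Finset.univ := by
          apply Finset.eq_univ_of_card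
          simpa using hcard
        have hkmem : k ∈ ((Finset.univ.filter (fun i => hB.eigenvalues i < 0)) ∪
            (Finset.univ.filter (fun i => 0 < hB.eigenvalues i))) := by
          rw [huniv]; exact Finset.mem_univ k
        rcases Finset.mem_union.mp hkmem with hm | hm
        · have h2 := (Finset.mem_filter.mp hm).2
          rw [← hlam, h] at h2; norm_num at h2
        · have h2 := (Finset.mem_filter.mp hm).2
          rw [← hlam, h] at h2; norm_num at h2
      · exact absurd h (not_lt.mpr hnp)
    have : k ∈ Finset.univ.filter (fun i => hB.eigenvalues i < 0) := by
      simp only [Finset.mem_filter]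
      exact ⟨Finset.mem_univ k, hkneg⟩
    rw [hk0] at this
    exact hk (Finset.mem_singleton.mp this)
  -- e vanishes away from k0
  have he0 : ∀ k, k ≠ k0 → e k = 0 := by
    intro k hk
    have h1 := heig k
    have h2 : lam k ≠ μ := by have := hpos' k hk; linarith
    have : (lam k - μ) * e k = 0 := by linear_combination h1
    rcases mul_eq_zero.mp this with h | h
    · exact absurd (by linarith : lam k = μ) h2
    · exact h
  have hek0 : e k0 ≠ 0 := by
    intro h0
    have hz : e = 0 := by
      funext k
      by_cases hk : k = k0
      · rw [hk]; exact h0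
      · exact he0 k hk
    have : o ⬝ᵥ o = 0 := by
      rw [← key o o, ← he, hz]
      simp
    rw [honorm] at this
    norm_num at this
  have hck0 : c k0 = 0 := by
    have h1 : c ⬝ᵥ e = 0 := by rw [hc, he, key, hwo]
    have h2 : c ⬝ᵥ e = c k0 * e k0 := by
      rw [dotProduct]
      rw [Finset.sum_eq_single k0]
      · intro b _ hb
        rw [he0 b hb, mul_zero]
      · intro h; exact absurd (Finset.mem_univ k0) h
    rw [h2] at h1
    exact (mul_eq_zero.mp h1).resolve_right hek0
  have hcne : c ≠ 0 := by
    intro h0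
    apply hw
    have : w ⬝ᵥ w = 0 := by rw [← key w w, ← hc, h0]; simp
    exact dotProduct_self_eq_zero.mp this
  obtain ⟨j, hj⟩ := Function.ne_iff.mp hcne
  have hjne : j ≠ k0 := by
    intro h; rw [h, hck0] at hj; exact hj rfl
  rw [hform w, ← hc]
  apply Finset.sum_pos'
  · intro k _
    by_cases hk : k = k0
    · rw [hk, hck0]; simp
    · exact mul_nonneg (hpos' k hk).le (sq_nonneg _)
  · exact ⟨j, Finset.mem_univ j,
      mul_pos (hpos' j hjne) (lt_of_le_of_ne (sq_nonneg _) (Ne.symm (pow_ne_zero 2 hj)))⟩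

private lemma cone_nonpos {n : ℕ} {B : Matrix (Fin n) (Fin n) ℝ} (hB : B.IsHermitian)
    (hneg : (Finset.univ.filter (fun i => hB.eigenvalues i < 0)).card = 1)
    (hpos : (Finset.univ.filter (fun i => 0 < hB.eigenvalues i)).card = n - 1)
    {o : Fin n → ℝ} {μ : ℝ} (hμ : μ < 0) (ho : B.mulVec o = μ • o)
    (honorm : o ⬝ᵥ o = 1)
    {u v : Fin n → ℝ} (hu : u ⬝ᵥ B.mulVec u = 0) (hu1 : u ⬝ᵥ o = 1)
    (hv : v ⬝ᵥ B.mulVec v = 0) (hv1 : v ⬝ᵥ o = 1) :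
    u ⬝ᵥ B.mulVec v ≤ 0 := by
  by_cases hw : u - v = 0
  · have : u = v := sub_eq_zero.mp hw
    rw [this, hv]
  · have hwo : (u - v) ⬝ᵥ o = 0 := by
      rw [sub_dotProduct, hu1, hv1, sub_self]
    have hpp := posdef_perp hB hneg hpos hμ ho honorm hwo hw
    have hexp : (u - v) ⬝ᵥ B.mulVec (u - v) = -2 * (u ⬝ᵥ B.mulVec v) := by
      rw [Matrix.mulVec_sub, sub_dotProduct, dotProduct_sub,
        dotProduct_sub, hu, hv, symdot hB v u]
      ring
    rw [hexp] at hpp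
    linarith

/-- With `T = min_α 1/(1 - 2C|α|₁) > 1`, for `x ∈ U_α = {v ∈ Q̂ : B(α,v) > C}`
and `y ∈ V_α = {v ∈ Q̂ : B(α,v) ≥ 0}` one has `|B(s_α·x, y)| ≥ T·|B(x,y)|`. -/
theorem stmt9 (n : ℕ) (B : Matrix (Fin n) (Fin n) ℝ) (hB : B.IsHermitian)
    (hdiag : ∀ i, B i i = 1)
    (hoff : ∀ i j, i ≠ j → B i j ≤ 0)
    (hneg : (Finset.univ.filter (fun i => hB.eigenvalues i < 0)).card = 1)
    (hpos : (Finset.univ.filter (fun i => 0 < hB.eigenvalues i)).card = n - 1)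
    (o : Fin n → ℝ) (μ : ℝ) (hμ : μ < 0) (ho : B.mulVec o = μ • o)
    (honorm : o ⬝ᵥ o = 1) (hopos : ∀ i, 0 < o i)
    (C : ℝ) (hC : 0 < C) (hC2 : ∀ j, C < 1 / (2 * o j))
    (i : Fin n) (x y : Fin n → ℝ)
    (hxQ : x ⬝ᵥ B.mulVec x = 0) (hx1 : x ⬝ᵥ o = 1)
    (hyQ : y ⬝ᵥ B.mulVec y = 0) (hy1 : y ⬝ᵥ o = 1)
    (hx : C < B.mulVec x i) (hy : 0 ≤ B.mulVec y i) :
    let T := Finset.univ.inf' ⟨i, Finset.mem_univ i⟩ (fun j => (1 - 2 * C * o j)⁻¹)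
    let sx := x - (2 * B.mulVec x i) • (Pi.single i (1:ℝ) : Fin n → ℝ)
    let nx := (sx ⬝ᵥ o)⁻¹ • sx
    T * |x ⬝ᵥ B.mulVec y| ≤ |nx ⬝ᵥ B.mulVec y| := by
  intro T sx nx
  set bx : ℝ := B.mulVec x i with hbx
  have hbxpos : 0 < bx := lt_trans hC hx
  -- dot products with the single vector
  have hxsingle : x ⬝ᵥ B.mulVec (Pi.single i (1:ℝ)) = bx := by
    rw [symdot hB, single_dotProduct, one_mul]
  have hsinglesingle : (Pi.single i (1:ℝ) : Fin n → ℝ) ⬝ᵥ B.mulVec (Pi.single i (1:ℝ)) = 1 := by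
    simp [single_dotProduct, Matrix.mulVec_single, hdiag]
  -- sx basic identities
  have hsxo : sx ⬝ᵥ o = 1 - 2 * bx * o i := by
    show (x - (2 * bx) • (Pi.single i (1:ℝ) : Fin n → ℝ)) ⬝ᵥ o = _
    rw [sub_dotProduct, smul_dotProduct, single_dotProduct, hx1]
    simp only [smul_eq_mul]
    ring
  have hxBsx : x ⬝ᵥ B.mulVec sx = -2 * bx ^ 2 := by
    show x ⬝ᵥ B.mulVec (x - (2 * bx) • (Pi.single i (1:ℝ) : Fin n → ℝ)) = _
    rw [Matrix.mulVec_sub, Matrix.mulVec_smul, dotProduct_sub, dotProduct_smul,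
      hxQ, hxsingle]
    simp only [smul_eq_mul]
    ring
  have hsxBsx : sx ⬝ᵥ B.mulVec sx = 0 := by
    show (x - (2 * bx) • (Pi.single i (1:ℝ) : Fin n → ℝ)) ⬝ᵥ
      B.mulVec (x - (2 * bx) • (Pi.single i (1:ℝ) : Fin n → ℝ)) = 0
    rw [Matrix.mulVec_sub, Matrix.mulVec_smul, dotProduct_sub, dotProduct_smul,
      sub_dotProduct, sub_dotProduct, smul_dotProduct,
      smul_dotProduct, hxQ, hxsingle, hsinglesingle]
    have h1 : (Pi.single i (1:ℝ) : Fin n → ℝ) ⬝ᵥ B.mulVec x = bx := by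
      rw [single_dotProduct, one_mul]
    rw [h1]
    simp only [smul_eq_mul]
    ring
  have hsxBy : sx ⬝ᵥ B.mulVec y = x ⬝ᵥ B.mulVec y - 2 * bx * (B.mulVec y i) := by
    show (x - (2 * bx) • (Pi.single i (1:ℝ) : Fin n → ℝ)) ⬝ᵥ B.mulVec y = _
    rw [sub_dotProduct, smul_dotProduct, single_dotProduct]
    simp only [smul_eq_mul]
    ring
  -- sx ≠ 0
  have hsxne : sx ≠ 0 := by
    intro h0
    rw [h0] at hxBsx
    simp at hxBsx
    nlinarith
  -- sx ⬝ᵥ o ≠ 0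
  have hsne : sx ⬝ᵥ o ≠ 0 := by
    intro h0
    have := posdef_perp hB hneg hpos hμ ho honorm h0 hsxne
    rw [hsxBsx] at this
    exact lt_irrefl 0 this
  -- sx ⬝ᵥ o > 0
  have hspos : 0 < sx ⬝ᵥ o := by
    rcases lt_or_gt_of_ne hsne with hlt | hgt
    · exfalso
      have hnxo : nx ⬝ᵥ o = 1 := by
        show ((sx ⬝ᵥ o)⁻¹ • sx) ⬝ᵥ o = 1
        rw [smul_dotProduct, smul_eq_mul, inv_mul_cancel₀ hsne]
      have hnxQ : nx ⬝ᵥ B.mulVec nx = 0 := by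
        show ((sx ⬝ᵥ o)⁻¹ • sx) ⬝ᵥ B.mulVec ((sx ⬝ᵥ o)⁻¹ • sx) = 0
        rw [Matrix.mulVec_smul, smul_dotProduct, dotProduct_smul, hsxBsx]
        simp
      have hle := cone_nonpos hB hneg hpos hμ ho honorm hxQ hx1 hnxQ hnxo
      have hxnx : x ⬝ᵥ B.mulVec nx = (sx ⬝ᵥ o)⁻¹ * (-2 * bx ^ 2) := by
        show x ⬝ᵥ B.mulVec ((sx ⬝ᵥ o)⁻¹ • sx) = _
        rw [Matrix.mulVec_smul, dotProduct_smul, hxBsx, smul_eq_mul]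
      rw [hxnx] at hle
      have hinv : (sx ⬝ᵥ o)⁻¹ < 0 := inv_lt_zero.mpr hlt
      nlinarith [mul_pos (neg_pos.mpr hinv) (mul_pos hbxpos hbxpos)]
    · exact hgt
  -- B(x,y) ≤ 0
  have hxyle : x ⬝ᵥ B.mulVec y ≤ 0 := cone_nonpos hB hneg hpos hμ ho honorm hxQ hx1 hyQ hy1
  -- positivity facts about 1 - 2C o j and T
  have hCo : ∀ j, 0 < 1 - 2 * C * o j := by
    intro j
    have h2 := hC2 j
    have h3 := hopos j
    rw [lt_div_iff₀ (by positivity)] at h2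
    linarith
  have hTle : T ≤ (1 - 2 * C * o i)⁻¹ :=
    Finset.inf'_le _ (Finset.mem_univ i)
  have hTpos : 0 < T := by
    have h := Finset.lt_inf'_iff (α := ℝ) ⟨i, Finset.mem_univ i⟩
      (f := fun j => (1 - 2 * C * o j)⁻¹) (a := 0)
    exact h.mpr fun j _ => inv_pos.mpr (hCo j)
  -- s < 1 - 2 C o i
  have hslt : sx ⬝ᵥ o < 1 - 2 * C * o i := by
    rw [hsxo]
    have := hopos i
    nlinarith
  have hTs : T ≤ (sx ⬝ᵥ o)⁻¹ := by
    refine le_trans hTle ?_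
    exact (inv_anti₀ hspos hslt.le)
  -- final computation
  have hnxBy : nx ⬝ᵥ B.mulVec y = (sx ⬝ᵥ o)⁻¹ * (x ⬝ᵥ B.mulVec y - 2 * bx * (B.mulVec y i)) := by
    show ((sx ⬝ᵥ o)⁻¹ • sx) ⬝ᵥ B.mulVec y = _
    rw [smul_dotProduct, smul_eq_mul, hsxBy]
  have hnum : x ⬝ᵥ B.mulVec y - 2 * bx * (B.mulVec y i) ≤ x ⬝ᵥ B.mulVec y := by nlinarith
  have hnumle : x ⬝ᵥ B.mulVec y - 2 * bx * (B.mulVec y i) ≤ 0 := le_trans hnum hxyle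
  rw [hnxBy, abs_mul, abs_of_pos (inv_pos.mpr hspos), abs_of_nonpos hnumle,
    abs_of_nonpos hxyle]
  calc T * -(x ⬝ᵥ B.mulVec y) ≤ (sx ⬝ᵥ o)⁻¹ * -(x ⬝ᵥ B.mulVec y) := by
        apply mul_le_mul_of_nonneg_right hTs (by linarith)
    _ ≤ (sx ⬝ᵥ o)⁻¹ * -(x ⬝ᵥ B.mulVec y - 2 * bx * (B.mulVec y i)) := by
        apply mul_le_mul_of_nonneg_left (by linarith) (le_of_lt (inv_pos.mpr hspos))
end

section
/- Let a, b, c be positive reals each in {cos(π/k) : k ∈ ℤ, k > 2} ∪ [1,∞), and let B be the 4×4 symmetric matrix with diagonal 1 and off-diagonal entries B₁₂ = −a, B₂₃ = −b, B₃₄ = −c, B₁₃ = B₁₄ = B₂₄ = 0. Then B has signature (2,2) if and only if B is not positive semidefinite and a² + b² + c² − a²c² < 1. -/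
open Matrix

/-- For positive reals `a, b, c`, each in `{cos(π/k) : k > 2} ∪ [1,∞)`,
the 4×4 path-shaped Coxeter Gram matrix has signature `(2,2)` iff it is not positive
semidefinite and `a² + b² + c² - a²c² < 1`. -/
theorem stmt10 (a b c : ℝ)
    (ha0 : 0 < a) (hb0 : 0 < b) (hc0 : 0 < c)
    (ha : (∃ k : ℕ, 2 < k ∧ a = Real.cos (Real.pi / k)) ∨ 1 ≤ a)
    (hb : (∃ k : ℕ, 2 < k ∧ b = Real.cos (Real.pi / k)) ∨ 1 ≤ b)
    (hc : (∃ k : ℕ, 2 < k ∧ c = Real.cos (Real.pi / k)) ∨ 1 ≤ c)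
    (B : Matrix (Fin 4) (Fin 4) ℝ)
    (hBdef : B = !![1, -a, 0, 0; -a, 1, -b, 0; 0, -b, 1, -c; 0, 0, -c, 1])
    (hB : B.IsHermitian) :
    ((Finset.univ.filter (fun i => hB.eigenvalues i < 0)).card = 2 ∧
     (Finset.univ.filter (fun i => 0 < hB.eigenvalues i)).card = 2) ↔
    (¬ B.PosSemidef ∧ a ^ 2 + b ^ 2 + c ^ 2 - a ^ 2 * c ^ 2 < 1) := by
  set ev := hB.eigenvalues with hev
  -- determinant of B, two ways
  have hdetp : B.det = ∏ i, ev i := by simpa using hB.det_eq_prod_eigenvalues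
  have hdetv : B.det = 1 - (a ^ 2 + b ^ 2 + c ^ 2 - a ^ 2 * c ^ 2) := by
    rw [hBdef]
    simp [Matrix.det_succ_row_zero, Fin.sum_univ_succ, Fin.succAbove]
    ring
  -- trace of B, two ways
  have htrp : B.trace = ∑ i, ev i := by
    simpa using hB.trace_eq_sum_eigenvalues
  have htrv : B.trace = 4 := by
    rw [hBdef]
    simp [Matrix.trace, Fin.sum_univ_succ]
    norm_num
  have hsum : ∑ i, ev i = 4 := by rw [← htrp, htrv]
  set S := Finset.univ.filter (fun i => ev i < 0) with hS
  set T := Finset.univ.filter (fun i => 0 < ev i) with hT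
  have hTpos : (0:ℝ) < ∏ i ∈ T, ev i :=
    Finset.prod_pos (fun i hi => (Finset.mem_filter.mp hi).2)
  have key : ∀ s : Finset (Fin 4), (∀ i ∈ s, ev i < 0) →
      (0:ℝ) < (-1) ^ s.card * ∏ i ∈ s, ev i := by
    intro s hs
    have h1 : (0:ℝ) < ∏ i ∈ s, (-ev i) :=
      Finset.prod_pos (fun i hi => by linarith [hs i hi])
    have h2 : ∏ i ∈ s, (-ev i) = (-1) ^ s.card * ∏ i ∈ s, ev i := by
      rw [← Finset.prod_const, ← Finset.prod_mul_distrib]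
      simp
    linarith [h2 ▸ h1]
  constructor
  · rintro ⟨hSc, hTc⟩
    constructor
    · intro hPSD
      obtain ⟨i, hi⟩ := Finset.card_pos.mp (by rw [hSc]; norm_num : 0 < S.card)
      have hnn : 0 ≤ ev i := hPSD.eigenvalues_nonneg i
      have := (Finset.mem_filter.mp hi).2
      linarith
    · -- show det > 0
      have hd : Disjoint S T := by
        rw [Finset.disjoint_left]
        intro i hiS hiT
        have h1 := (Finset.mem_filter.mp hiS).2
        have h2 := (Finset.mem_filter.mp hiT).2
        linarith
      have hTeq : T = Sᶜ := by
        apply Finset.eq_of_subset_of_card_le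
        · intro i hiT
          rw [Finset.mem_compl]
          exact fun hiS => (Finset.disjoint_left.mp hd hiS hiT)
        · rw [Finset.card_compl, hSc, hTc]
          simp
      have hSpos : (0:ℝ) < ∏ i ∈ S, ev i := by
        have := key S (fun i hi => (Finset.mem_filter.mp hi).2)
        rw [hSc] at this
        norm_num at this
        exact this
      have hprod : (0:ℝ) < ∏ i, ev i := by
        rw [← Finset.prod_mul_prod_compl S ev, ← hTeq]
        exact mul_pos hSpos hTpos
      rw [hdetp] at hdetv
      linarith
  · rintro ⟨hnpsd, hlt⟩
    have hprod : (0:ℝ) < ∏ i, ev i := by rw [← hdetp]; linarith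
    have hne : ∀ i, ev i ≠ 0 := by
      intro i h0
      have : ∏ i, ev i = 0 := Finset.prod_eq_zero (Finset.mem_univ i) h0
      linarith
    have hneg : ∃ i, ev i < 0 := by
      by_contra h
      push_neg at h
      exact hnpsd (hB.posSemidef_iff_eigenvalues_nonneg.mpr h)
    have hTeq : T = Sᶜ := by
      ext i
      simp only [hT, hS, Finset.mem_filter, Finset.mem_compl, Finset.mem_univ, true_and]
      constructor
      · intro h hlt'; linarith
      · intro h
        rcases lt_trichotomy (ev i) 0 with h1 | h1 | h1
        · exact absurd h1 h
        · exact absurd h1 (hne i)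
        · exact h1
    have hScompl : (0:ℝ) < ∏ i ∈ Sᶜ, ev i := hTeq ▸ hTpos
    have hSpos : (0:ℝ) < ∏ i ∈ S, ev i := by
      rcases (mul_pos_iff.mp (by rw [Finset.prod_mul_prod_compl S ev]; exact hprod)) with
        ⟨h1, _⟩ | ⟨_, h2⟩
      · exact h1
      · linarith
    have heven : Even S.card := by
      by_contra hodd
      have hodd' : Odd S.card := Nat.not_even_iff_odd.mp hodd
      have := key S (fun i hi => (Finset.mem_filter.mp hi).2)
      rw [hodd'.neg_one_pow] at this
      linarith
    have hge1 : 1 ≤ S.card := by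
      obtain ⟨i, hi⟩ := hneg
      exact Finset.card_pos.mpr ⟨i, Finset.mem_filter.mpr ⟨Finset.mem_univ i, hi⟩⟩
    have hle4 : S.card ≤ 4 := by
      simpa using Finset.card_le_univ S
    have hne4 : S.card ≠ 4 := by
      intro h4
      have hSuniv : S = Finset.univ := by
        apply Finset.eq_univ_of_card
        simp [h4]
      have hallneg : ∀ i ∈ (Finset.univ : Finset (Fin 4)), ev i < 0 := by
        intro i _
        have : i ∈ S := hSuniv ▸ Finset.mem_univ i
        exact (Finset.mem_filter.mp this).2
      have : ∑ i, ev i < 0 := Finset.sum_neg hallneg Finset.univ_nonempty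
      linarith
    have hScard : S.card = 2 := by
      obtain ⟨k, hk⟩ := heven
      omega
    refine ⟨hScard, ?_⟩
    rw [hTeq, Finset.card_compl, hScard]
    simp
end

section
/- Suppose w ∈ W has infinite order and x ∈ Q̂ is such that a subsequence (w^{nᵢ} · x) converges to y ∈ Q̂ with ||w^{nᵢ}(x)|₁| → ∞. Then for every fixed k ∈ ℤ, the shifted subsequence (w^{nᵢ+k} · x) also converges to y. -/
open Matrix

section stmt12aux

lemma stmt12_dot_inner (n : ℕ) (a b : Fin n → ℝ) :
    a ⬝ᵥ b = @inner ℝ (EuclideanSpace ℝ (Fin n)) _ (WithLp.toLp 2 a) (WithLp.toLp 2 b) := by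
  rw [PiLp.inner_apply]; simp [dotProduct, mul_comm]

lemma stmt12_dot_repr (n : ℕ) (B : Matrix (Fin n) (Fin n) ℝ) (hB : B.IsHermitian)
    (a b : Fin n → ℝ) :
    a ⬝ᵥ b = ∑ i, hB.eigenvectorBasis.repr (WithLp.toLp 2 a) i * hB.eigenvectorBasis.repr (WithLp.toLp 2 b) i := by
  rw [stmt12_dot_inner, ← LinearIsometryEquiv.inner_map_map hB.eigenvectorBasis.repr,
    PiLp.inner_apply]
  simp [mul_comm]

lemma stmt12_repr_mulVec (n : ℕ) (B : Matrix (Fin n) (Fin n) ℝ) (hB : B.IsHermitian)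
    (v : Fin n → ℝ) (i : Fin n) :
    hB.eigenvectorBasis.repr (WithLp.toLp 2 (B.mulVec v)) i = hB.eigenvalues i * hB.eigenvectorBasis.repr (WithLp.toLp 2 v) i := by
  have hBT : Bᵀ = B := by
    ext i j; have := congrFun (congrFun hB i) j; simpa using this
  have key : ∀ a : Fin n → ℝ, @inner ℝ (EuclideanSpace ℝ (Fin n)) _ (hB.eigenvectorBasis i) (WithLp.toLp 2 a)
      = (hB.eigenvectorBasis i).ofLp ⬝ᵥ a := fun a => by rw [stmt12_dot_inner, WithLp.toLp_ofLp]
  rw [OrthonormalBasis.repr_apply_apply, OrthonormalBasis.repr_apply_apply,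
    key, key, dotProduct_mulVec, ← mulVec_transpose, hBT]
  erw [hB.mulVec_eigenvectorBasis]
  rw [smul_dotProduct]
  rfl

/-- positivity of the form on the orthogonal complement of `o` -/
lemma stmt12_perp_pos (n : ℕ) (B : Matrix (Fin n) (Fin n) ℝ) (hB : B.IsHermitian)
    (hneg : (Finset.univ.filter (fun i => hB.eigenvalues i < 0)).card = 1)
    (hpos : (Finset.univ.filter (fun i => 0 < hB.eigenvalues i)).card = n - 1)
    (o : Fin n → ℝ) (μ : ℝ) (hμ : μ < 0) (ho : B.mulVec o = μ • o)
    (honorm : o ⬝ᵥ o = 1) :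
    ∀ u : Fin n → ℝ, u ⬝ᵥ o = 0 → u ≠ 0 → 0 < u ⬝ᵥ B.mulVec u := by
  set e := hB.eigenvectorBasis with he
  set lam := hB.eigenvalues with hlam
  obtain ⟨j, hj⟩ := Finset.card_eq_one.mp hneg
  have hjneg : lam j < 0 := by
    have : j ∈ Finset.univ.filter (fun i => lam i < 0) := by rw [hj]; simp
    simpa using this
  have hipos : ∀ i, i ≠ j → 0 < lam i := by
    intro i hij
    have hsub : Finset.univ.filter (fun i => 0 < lam i) ⊆ Finset.univ.erase j := by
      intro a ha
      simp only [Finset.mem_filter, Finset.mem_univ, true_and] at ha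
      refine Finset.mem_erase.mpr ⟨?_, Finset.mem_univ a⟩
      rintro rfl; exact absurd ha (not_lt.mpr hjneg.le)
    have hcard : (Finset.univ.erase j).card = n - 1 := by
      rw [Finset.card_erase_of_mem (Finset.mem_univ j)]; simp
    have := Finset.eq_of_subset_of_card_le hsub (by rw [hcard, hpos])
    have hi' : i ∈ Finset.univ.erase j := Finset.mem_erase.mpr ⟨hij, Finset.mem_univ i⟩
    rw [← this] at hi'
    simpa using hi'
  have hoe : ∀ i, i ≠ j → e.repr (WithLp.toLp 2 o) i = 0 := by
    intro i hij
    have h1 : e.repr (WithLp.toLp 2 (B.mulVec o)) i = lam i * e.repr (WithLp.toLp 2 o) i := stmt12_repr_mulVec n B hB o i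
    rw [ho] at h1
    have h2 : e.repr (WithLp.toLp 2 ((μ : ℝ) • o)) i = μ * e.repr (WithLp.toLp 2 o) i := by
      rw [WithLp.toLp_smul, _root_.map_smul]; rfl
    rw [h2] at h1
    have hne : μ ≠ lam i := fun h => absurd (h ▸ hipos i hij) (not_lt.mpr hμ.le)
    have := sub_eq_zero.mpr h1
    rw [← sub_mul] at this
    exact (mul_eq_zero.mp this).resolve_left (sub_ne_zero.mpr hne)
  have hoj : e.repr (WithLp.toLp 2 o) j ^ 2 = 1 := by
    have := stmt12_dot_repr n B hB o o
    rw [honorm, Finset.sum_eq_single j (fun i _ hij => by rw [hoe i hij]; ring)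
      (by simp)] at this
    rw [sq]; exact this.symm
  have hojne : e.repr (WithLp.toLp 2 o) j ≠ 0 := by
    intro h; rw [h] at hoj; simp at hoj
  intro u huo hune
  have huj : e.repr (WithLp.toLp 2 u) j = 0 := by
    have := stmt12_dot_repr n B hB u o
    rw [huo, Finset.sum_eq_single j (fun i _ hij => by rw [hoe i hij]; ring)
      (by simp)] at this
    exact (mul_eq_zero.mp this.symm).resolve_right hojne
  have hquad : u ⬝ᵥ B.mulVec u = ∑ i, lam i * e.repr (WithLp.toLp 2 u) i ^ 2 := by
    rw [stmt12_dot_repr n B hB]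
    refine Finset.sum_congr rfl fun i _ => ?_
    rw [stmt12_repr_mulVec n B hB]; ring
  rw [hquad]
  have hex : ∃ i, e.repr (WithLp.toLp 2 u) i ≠ 0 := by
    by_contra h
    push_neg at h
    apply hune
    have : e.repr (WithLp.toLp 2 u) = 0 := by ext i; exact h i
    simpa using congrArg e.repr.symm this
  obtain ⟨i₀, hi₀⟩ := hex
  have hi₀j : i₀ ≠ j := fun h => hi₀ (h ▸ huj)
  refine Finset.sum_pos' (fun i _ => ?_) ⟨i₀, Finset.mem_univ i₀, ?_⟩
  · rcases eq_or_ne i j with rfl | hij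
    · rw [huj]; simp
    · exact mul_nonneg (hipos i hij).le (sq_nonneg _)
  · exact mul_pos (hipos i₀ hi₀j) (by positivity)

lemma stmt12_cont_dot (n : ℕ) (o : Fin n → ℝ) : Continuous fun u : Fin n → ℝ => u ⬝ᵥ o := by
  simp only [dotProduct]; fun_prop

lemma stmt12_cont_self (n : ℕ) : Continuous fun u : Fin n → ℝ => u ⬝ᵥ u := by
  simp only [dotProduct]; fun_prop

lemma stmt12_cont_quad (n : ℕ) (B : Matrix (Fin n) (Fin n) ℝ) :
    Continuous fun p : (Fin n → ℝ) × (Fin n → ℝ) => p.1 ⬝ᵥ B.mulVec p.2 := by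
  simp only [dotProduct, mulVec]; fun_prop

lemma stmt12_dot_self_pos (n : ℕ) {u : Fin n → ℝ} (hu : u ≠ 0) : 0 < u ⬝ᵥ u := by
  obtain ⟨i, hi⟩ : ∃ i, u i ≠ 0 := by
    by_contra h; push_neg at h; exact hu (funext h)
  exact Finset.sum_pos' (fun j _ => mul_self_nonneg _)
    ⟨i, Finset.mem_univ i, mul_self_pos.mpr hi⟩

lemma stmt12_Bsymm (n : ℕ) (B : Matrix (Fin n) (Fin n) ℝ) (hB : B.IsHermitian)
    (a b : Fin n → ℝ) : a ⬝ᵥ B.mulVec b = b ⬝ᵥ B.mulVec a := by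
  have hBT : Bᵀ = B := by
    ext i j; have := congrFun (congrFun hB i) j; simpa using this
  rw [dotProduct_mulVec, ← mulVec_transpose, hBT, dotProduct_comm]

lemma stmt12_posdef_bound (n : ℕ) (B : Matrix (Fin n) (Fin n) ℝ) (o : Fin n → ℝ)
    (hperp : ∀ u : Fin n → ℝ, u ⬝ᵥ o = 0 → u ≠ 0 → 0 < u ⬝ᵥ B.mulVec u) :
    ∃ m : ℝ, 0 < m ∧ ∀ p : Fin n → ℝ, p ⬝ᵥ o = 0 → m * (p ⬝ᵥ p) ≤ p ⬝ᵥ B.mulVec p := by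
  set T : Set (Fin n → ℝ) := {p | p ⬝ᵥ o = 0 ∧ p ⬝ᵥ p = 1} with hT
  have hTclosed : IsClosed T :=
    ((isClosed_eq (stmt12_cont_dot n o) continuous_const).inter
      (isClosed_eq (stmt12_cont_self n) continuous_const))
  have hTbdd : Bornology.IsBounded T := by
    rw [isBounded_iff_forall_norm_le]
    refine ⟨1, fun p hp => ?_⟩
    rw [pi_norm_le_iff_of_nonneg zero_le_one]
    intro i
    have h1 : p i * p i ≤ p ⬝ᵥ p :=
      Finset.single_le_sum (fun j _ => mul_self_nonneg (p j)) (Finset.mem_univ i)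
    rw [hp.2] at h1
    rw [Real.norm_eq_abs]
    exact abs_le_one_iff_mul_self_le_one.mpr h1
  have hTcomp : IsCompact T := Metric.isCompact_of_isClosed_isBounded hTclosed hTbdd
  have hmem : ∀ p : Fin n → ℝ, p ⬝ᵥ o = 0 → p ≠ 0 →
      (Real.sqrt (p ⬝ᵥ p))⁻¹ • p ∈ T ∧
      ((Real.sqrt (p ⬝ᵥ p))⁻¹ • p) ⬝ᵥ B.mulVec ((Real.sqrt (p ⬝ᵥ p))⁻¹ • p)
        = (p ⬝ᵥ p)⁻¹ * (p ⬝ᵥ B.mulVec p) := by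
    intro p hpo hp0
    have hpp : 0 < p ⬝ᵥ p := stmt12_dot_self_pos n hp0
    have hs : Real.sqrt (p ⬝ᵥ p) > 0 := Real.sqrt_pos.mpr hpp
    have hss : Real.sqrt (p ⬝ᵥ p) * Real.sqrt (p ⬝ᵥ p) = p ⬝ᵥ p :=
      Real.mul_self_sqrt hpp.le
    constructor
    · constructor
      · rw [smul_dotProduct, hpo, smul_eq_mul, mul_zero]
      · rw [smul_dotProduct, dotProduct_smul, smul_eq_mul, smul_eq_mul]
        field_simp
        rw [Real.sq_sqrt hpp.le]
    · rw [smul_dotProduct, mulVec_smul, dotProduct_smul, smul_eq_mul, smul_eq_mul,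
        ← mul_assoc, ← mul_inv, hss]
  rcases T.eq_empty_or_nonempty with hTe | hTne
  · refine ⟨1, one_pos, fun p hpo => ?_⟩
    rcases eq_or_ne p 0 with rfl | hp0
    · simp
    · exact absurd (hTe ▸ (hmem p hpo hp0).1) (Set.notMem_empty _)
  · obtain ⟨p₀, hp₀T, hp₀min⟩ := hTcomp.exists_isMinOn hTne
      ((stmt12_cont_quad n B).comp (continuous_id.prodMk continuous_id)).continuousOn
    have hp₀ne : p₀ ≠ 0 := by
      intro h; rw [h] at hp₀T
      simpa [dotProduct] using hp₀T.2
    set m := p₀ ⬝ᵥ B.mulVec p₀ with hm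
    refine ⟨m, hperp p₀ hp₀T.1 hp₀ne, fun p hpo => ?_⟩
    rcases eq_or_ne p 0 with rfl | hp0
    · simp
    · have hpp : 0 < p ⬝ᵥ p := stmt12_dot_self_pos n hp0
      obtain ⟨hqT, hqeq⟩ := hmem p hpo hp0
      have h2 : m ≤ ((Real.sqrt (p ⬝ᵥ p))⁻¹ • p) ⬝ᵥ B.mulVec ((Real.sqrt (p ⬝ᵥ p))⁻¹ • p) :=
        hp₀min hqT
      rw [hqeq] at h2
      calc m * (p ⬝ᵥ p) ≤ ((p ⬝ᵥ p)⁻¹ * (p ⬝ᵥ B.mulVec p)) * (p ⬝ᵥ p) :=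
            mul_le_mul_of_nonneg_right h2 hpp.le
        _ = p ⬝ᵥ B.mulVec p := by field_simp

end stmt12aux

section stmt12aux2
open Matrix

lemma stmt12_hwz (n : ℕ) (B : Matrix (Fin n) (Fin n) ℝ)
    (w : (Fin n → ℝ) ≃ₗ[ℝ] (Fin n → ℝ))
    (hw : ∀ u v : Fin n → ℝ, (w u) ⬝ᵥ B.mulVec (w v) = u ⬝ᵥ B.mulVec v) :
    ∀ (m : ℤ) (u v : Fin n → ℝ),
      ((w ^ m) u) ⬝ᵥ B.mulVec ((w ^ m) v) = u ⬝ᵥ B.mulVec v := by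
  intro m
  induction m using Int.induction_on with
  | zero => intro u v; simp
  | succ i ih =>
    intro u v
    have h1 : ∀ z : Fin n → ℝ, (w ^ ((i : ℤ) + 1)) z = (w ^ (i : ℤ)) (w z) := by
      intro z; rw [_root_.zpow_add]; rfl
    rw [h1, h1, ih (w u) (w v), hw]
  | pred i ih =>
    intro u v
    have h1 : ∀ z : Fin n → ℝ, w ((w ^ (-(i : ℤ) - 1)) z) = (w ^ (-(i : ℤ))) z := by
      intro z
      have e : (w ^ (-(i : ℤ))) = w ^ (1 + (-(i : ℤ) - 1)) := by norm_num
      rw [e, _root_.zpow_add, zpow_one]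
      rfl
    rw [← hw ((w ^ (-(i:ℤ) - 1)) u) ((w ^ (-(i:ℤ) - 1)) v), h1, h1, ih]

end stmt12aux2

section stmt12aux3
open Matrix

lemma stmt12_S_compact (n : ℕ) (B : Matrix (Fin n) (Fin n) ℝ) (hB : B.IsHermitian)
    (o : Fin n → ℝ) (μ : ℝ) (hμ : μ < 0) (ho : B.mulVec o = μ • o) (honorm : o ⬝ᵥ o = 1)
    (m : ℝ) (hm : 0 < m)
    (hmbd : ∀ p : Fin n → ℝ, p ⬝ᵥ o = 0 → m * (p ⬝ᵥ p) ≤ p ⬝ᵥ B.mulVec p) :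
    IsCompact {u : Fin n → ℝ | u ⬝ᵥ B.mulVec u = 0 ∧ u ⬝ᵥ o = 1} := by
  refine Metric.isCompact_of_isClosed_isBounded ?_ ?_
  · exact (isClosed_eq ((stmt12_cont_quad n B).comp
      (continuous_id.prodMk continuous_id)) continuous_const).inter
      (isClosed_eq (stmt12_cont_dot n o) continuous_const)
  · rw [isBounded_iff_forall_norm_le]
    refine ⟨‖o‖ + Real.sqrt (-μ / m), fun u hu => ?_⟩
    obtain ⟨huQ, hu1⟩ := hu
    set p := u - o with hp
    have hpo : p ⬝ᵥ o = 0 := by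
      rw [hp, sub_dotProduct, hu1, honorm, sub_self]
    have huBo : u ⬝ᵥ B.mulVec o = μ := by
      rw [ho, dotProduct_smul, smul_eq_mul, hu1, mul_one]
    have hoBo : o ⬝ᵥ B.mulVec o = μ := by
      rw [ho, dotProduct_smul, smul_eq_mul, honorm, mul_one]
    have hoBu : o ⬝ᵥ B.mulVec u = μ := by
      rw [stmt12_Bsymm n B hB, huBo]
    have hquad : p ⬝ᵥ B.mulVec p = -μ := by
      rw [hp, sub_dotProduct, mulVec_sub, dotProduct_sub, dotProduct_sub,
        huQ, huBo, hoBu, hoBo]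
      ring
    have hpp : p ⬝ᵥ p ≤ -μ / m := by
      have := hmbd p hpo
      rw [hquad] at this
      rw [le_div_iff₀ hm]
      linarith [this]
    have hpn : ‖p‖ ≤ Real.sqrt (-μ / m) := by
      rw [pi_norm_le_iff_of_nonneg (Real.sqrt_nonneg _)]
      intro i
      have h1 : p i * p i ≤ p ⬝ᵥ p :=
        Finset.single_le_sum (fun j _ => mul_self_nonneg (p j)) (Finset.mem_univ i)
      rw [Real.norm_eq_abs, ← Real.sqrt_sq_eq_abs]
      exact Real.sqrt_le_sqrt (by nlinarith)
    calc ‖u‖ = ‖o + p‖ := by rw [hp]; ring_nf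
      _ ≤ ‖o‖ + ‖p‖ := norm_add_le _ _
      _ ≤ ‖o‖ + Real.sqrt (-μ / m) := by linarith

lemma stmt12_shift_bound (n : ℕ) (B : Matrix (Fin n) (Fin n) ℝ) (o : Fin n → ℝ)
    (w : (Fin n → ℝ) ≃ₗ[ℝ] (Fin n → ℝ)) (k : ℤ)
    (hwzk : ∀ u : Fin n → ℝ, ((w ^ k) u) ⬝ᵥ B.mulVec ((w ^ k) u) = u ⬝ᵥ B.mulVec u)
    (hScomp : IsCompact {u : Fin n → ℝ | u ⬝ᵥ B.mulVec u = 0 ∧ u ⬝ᵥ o = 1})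
    (x : Fin n → ℝ) (hxS : x ⬝ᵥ B.mulVec x = 0 ∧ x ⬝ᵥ o = 1)
    (hzero : ∀ u : Fin n → ℝ, u ⬝ᵥ B.mulVec u = 0 → u ⬝ᵥ o = 0 → u = 0) :
    ∃ C : ℝ, 1 ≤ C ∧ ∀ u : Fin n → ℝ, u ⬝ᵥ B.mulVec u = 0 →
      |((w ^ k) u) ⬝ᵥ o| ≤ C * |u ⬝ᵥ o| := by
  have hcontk : Continuous fun u : Fin n → ℝ => |((w ^ k) u) ⬝ᵥ o| := by
    have h1 : Continuous fun u : Fin n → ℝ => (w ^ k) u :=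
      LinearMap.continuous_on_pi
        ((w ^ k : (Fin n → ℝ) ≃ₗ[ℝ] (Fin n → ℝ)) : (Fin n → ℝ) →ₗ[ℝ] (Fin n → ℝ))
    exact continuous_abs.comp ((stmt12_cont_dot n o).comp h1)
  obtain ⟨u₀, hu₀S, hu₀max⟩ := hScomp.exists_isMaxOn ⟨x, hxS⟩ hcontk.continuousOn
  refine ⟨max 1 (|((w ^ k) u₀) ⬝ᵥ o|), le_max_left _ _, fun u hu => ?_⟩
  set C := max 1 (|((w ^ k) u₀) ⬝ᵥ o|) with hC
  rcases eq_or_ne (u ⬝ᵥ o) 0 with h0 | h0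
  · have hu0 : u = 0 := hzero u hu h0
    rw [hu0]
    simp
  · set t := u ⬝ᵥ o with ht
    have hvS : (t⁻¹ • u) ∈ {u : Fin n → ℝ | u ⬝ᵥ B.mulVec u = 0 ∧ u ⬝ᵥ o = 1} := by
      constructor
      · rw [smul_dotProduct, mulVec_smul, dotProduct_smul, hu]
        simp
      · rw [smul_dotProduct, smul_eq_mul, ← ht, inv_mul_cancel₀ h0]
    have hle : |((w ^ k) (t⁻¹ • u)) ⬝ᵥ o| ≤ |((w ^ k) u₀) ⬝ᵥ o| := hu₀max hvS
    have heq : ((w ^ k) (t⁻¹ • u)) = t⁻¹ • ((w ^ k) u) := by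
      rw [_root_.map_smul]
    rw [heq, smul_dotProduct, smul_eq_mul, abs_mul, abs_inv] at hle
    have htpos : 0 < |t| := abs_pos.mpr h0
    calc |((w ^ k) u) ⬝ᵥ o| = (|t|⁻¹ * |((w ^ k) u) ⬝ᵥ o|) * |t| := by field_simp
      _ ≤ |((w ^ k) u₀) ⬝ᵥ o| * |t| := mul_le_mul_of_nonneg_right hle htpos.le
      _ ≤ C * |t| := mul_le_mul_of_nonneg_right (le_max_right _ _) htpos.le

end stmt12aux3

set_option maxHeartbeats 1000000 in
/-- If `w` (of infinite order, preserving `B`) and `x ∈ Q̂` are such that a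
subsequence `w^{nᵢ} · x` of normalized iterates converges to `y ∈ Q̂` with
`||w^{nᵢ}(x)|₁| → ∞`, then every shifted subsequence `w^{nᵢ+k} · x` also converges to `y`. -/
theorem stmt12 (n : ℕ) (B : Matrix (Fin n) (Fin n) ℝ) (hB : B.IsHermitian)
    (hneg : (Finset.univ.filter (fun i => hB.eigenvalues i < 0)).card = 1)
    (hpos : (Finset.univ.filter (fun i => 0 < hB.eigenvalues i)).card = n - 1)
    (o : Fin n → ℝ) (μ : ℝ) (hμ : μ < 0) (ho : B.mulVec o = μ • o)
    (honorm : o ⬝ᵥ o = 1)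
    (w : (Fin n → ℝ) ≃ₗ[ℝ] (Fin n → ℝ))
    (hw : ∀ u v : Fin n → ℝ, (w u) ⬝ᵥ B.mulVec (w v) = u ⬝ᵥ B.mulVec v)
    (hord : ¬ IsOfFinOrder w)
    (x y : Fin n → ℝ)
    (hxQ : x ⬝ᵥ B.mulVec x = 0) (hx1 : x ⬝ᵥ o = 1)
    (hyQ : y ⬝ᵥ B.mulVec y = 0) (hy1 : y ⬝ᵥ o = 1)
    (ni : ℕ → ℕ) (hni : StrictMono ni)
    (hconv : Filter.Tendsto
      (fun i : ℕ => (((w ^ (ni i : ℤ)) x) ⬝ᵥ o)⁻¹ • ((w ^ (ni i : ℤ)) x))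
      Filter.atTop (nhds y))
    (hdiv : Filter.Tendsto (fun i : ℕ => |((w ^ (ni i : ℤ)) x) ⬝ᵥ o|)
      Filter.atTop Filter.atTop)
    (k : ℤ) :
    Filter.Tendsto
      (fun i : ℕ => (((w ^ ((ni i : ℤ) + k)) x) ⬝ᵥ o)⁻¹ • ((w ^ ((ni i : ℤ) + k)) x))
      Filter.atTop (nhds y) := by
  have hperp := stmt12_perp_pos n B hB hneg hpos o μ hμ ho honorm
  have hzero : ∀ u : Fin n → ℝ, u ⬝ᵥ B.mulVec u = 0 → u ⬝ᵥ o = 0 → u = 0 := by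
    intro u h1 h2
    by_contra hne
    exact (hperp u h2 hne).ne' h1
  obtain ⟨m, hm, hmbd⟩ := stmt12_posdef_bound n B o hperp
  have hScomp := stmt12_S_compact n B hB o μ hμ ho honorm m hm hmbd
  have hwz := stmt12_hwz n B w hw
  obtain ⟨C, hC1, hCk⟩ := stmt12_shift_bound n B o w (-k)
    (fun u => hwz (-k) u u) hScomp x ⟨hxQ, hx1⟩ hzero
  set S : Set (Fin n → ℝ) := {u | u ⬝ᵥ B.mulVec u = 0 ∧ u ⬝ᵥ o = 1} with hS
  set a : ℕ → ℝ := fun i => ((w ^ (ni i : ℤ)) x) ⬝ᵥ o with ha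
  set b : ℕ → ℝ := fun i => ((w ^ ((ni i : ℤ) + k)) x) ⬝ᵥ o with hb
  set f : ℕ → (Fin n → ℝ) := fun i => (b i)⁻¹ • ((w ^ ((ni i : ℤ) + k)) x) with hf
  set h : ℕ → (Fin n → ℝ) := fun i => (a i)⁻¹ • ((w ^ (ni i : ℤ)) x) with hh
  have hQm : ∀ m : ℤ, ((w ^ m) x) ⬝ᵥ B.mulVec ((w ^ m) x) = 0 := fun m => by
    rw [hwz m x x, hxQ]
  have hcompose : ∀ (p q : ℤ) (z : Fin n → ℝ), (w ^ p) ((w ^ q) z) = (w ^ (p + q)) z := by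
    intro p q z
    rw [_root_.zpow_add]
    rfl
  have hxne : ∀ m : ℤ, (w ^ m) x ≠ 0 := by
    intro m hz
    have hxe : x = (w ^ (-m)) ((w ^ m) x) := by
      rw [hcompose]
      simp
    rw [hz, map_zero] at hxe
    rw [hxe] at hx1
    simp at hx1
  have hbne : ∀ i, b i ≠ 0 := by
    intro i hbi
    exact hxne _ (hzero _ (hQm ((ni i : ℤ) + k)) hbi)
  have hfS : ∀ i, f i ∈ S := by
    intro i
    constructor
    · show (f i) ⬝ᵥ B.mulVec (f i) = 0
      rw [hf]
      simp only
      rw [smul_dotProduct, mulVec_smul, dotProduct_smul, hQm]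
      simp
    · show (f i) ⬝ᵥ o = 1
      rw [hf]
      simp only
      rw [smul_dotProduct, smul_eq_mul, inv_mul_cancel₀ (hbne i)]
  have hcomp : ∀ i, (w ^ (-k)) ((w ^ ((ni i : ℤ) + k)) x) = (w ^ (ni i : ℤ)) x := by
    intro i
    rw [hcompose]
    norm_num
  have hab : ∀ i, |a i| ≤ C * |b i| := by
    intro i
    have := hCk ((w ^ ((ni i : ℤ) + k)) x) (hQm _)
    rw [hcomp i] at this
    exact this
  set c : ℝ := x ⬝ᵥ B.mulVec ((w ^ k) x) with hc
  have hmix : ∀ i, (h i) ⬝ᵥ B.mulVec (f i) = (a i)⁻¹ * ((b i)⁻¹ * c) := by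
    intro i
    rw [hh, hf]
    simp only
    rw [smul_dotProduct, mulVec_smul, dotProduct_smul, smul_eq_mul, smul_eq_mul]
    congr 2
    rw [← hcompose (ni i : ℤ) k x, hwz]
  have hmix0 : Filter.Tendsto (fun i => (h i) ⬝ᵥ B.mulVec (f i)) Filter.atTop (nhds 0) := by
    apply squeeze_zero_norm' (a := fun i => (C * |c|) * |a i|⁻¹)
    · filter_upwards [hdiv.eventually_ge_atTop 1] with i hi
      have hai : (1 : ℝ) ≤ |a i| := hi
      have hapos : (0 : ℝ) < |a i| := lt_of_lt_of_le one_pos hai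
      have hbpos : 0 < |b i| := abs_pos.mpr (hbne i)
      have h4 : 1 * |b i|⁻¹ ≤ |a i| * |b i|⁻¹ :=
        mul_le_mul_of_nonneg_right hai (inv_nonneg.mpr hbpos.le)
      have h5 : |a i| * |b i|⁻¹ ≤ C := by
        rw [← div_eq_mul_inv, div_le_iff₀ hbpos]
        exact hab i
      have h3 : |b i|⁻¹ ≤ C := by linarith
      have heq2 : ‖(h i) ⬝ᵥ B.mulVec (f i)‖ = |a i|⁻¹ * (|b i|⁻¹ * |c|) := by
        rw [hmix i, Real.norm_eq_abs, abs_mul, abs_mul, abs_inv, abs_inv]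
      rw [heq2]
      calc |a i|⁻¹ * (|b i|⁻¹ * |c|) ≤ |a i|⁻¹ * (C * |c|) :=
            mul_le_mul_of_nonneg_left
              (mul_le_mul_of_nonneg_right h3 (abs_nonneg c)) (inv_nonneg.mpr hapos.le)
        _ = (C * |c|) * |a i|⁻¹ := by ring
    · have h1 : Filter.Tendsto (fun i => |a i|⁻¹) Filter.atTop (nhds 0) :=
        hdiv.inv_tendsto_atTop
      have := h1.const_mul (C * |c|)
      simpa using this
  apply Filter.tendsto_of_subseq_tendsto
  intro ns hns
  obtain ⟨z, hzS, φ, hφ, hzconv⟩ := hScomp.tendsto_subseq (fun i => hfS (ns i))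
  have hnsφ : Filter.Tendsto (fun n => ns (φ n)) Filter.atTop Filter.atTop :=
    hns.comp hφ.tendsto_atTop
  have hyz : y ⬝ᵥ B.mulVec z = 0 := by
    have t1 : Filter.Tendsto (fun n => (h (ns (φ n)), f (ns (φ n)))) Filter.atTop
        (nhds (y, z)) := (hconv.comp hnsφ).prodMk_nhds hzconv
    have t2 : Filter.Tendsto (fun n => (h (ns (φ n))) ⬝ᵥ B.mulVec (f (ns (φ n))))
        Filter.atTop (nhds (y ⬝ᵥ B.mulVec z)) :=
      ((stmt12_cont_quad n B).tendsto (y, z)).comp t1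
    have t3 : Filter.Tendsto (fun n => (h (ns (φ n))) ⬝ᵥ B.mulVec (f (ns (φ n))))
        Filter.atTop (nhds 0) := hmix0.comp hnsφ
    exact tendsto_nhds_unique t2 t3
  have hdiff : (y - z) ⬝ᵥ B.mulVec (y - z) = 0 := by
    have hzy : z ⬝ᵥ B.mulVec y = 0 := by rw [stmt12_Bsymm n B hB, hyz]
    rw [sub_dotProduct, mulVec_sub, dotProduct_sub, dotProduct_sub, hyQ, hzS.1, hyz, hzy]
    ring
  have hdiffo : (y - z) ⬝ᵥ o = 0 := by
    rw [sub_dotProduct, hy1, hzS.2]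
    ring
  have hyz' : y = z := sub_eq_zero.mp (hzero _ hdiff hdiffo)
  exact ⟨φ, hyz' ▸ hzconv⟩
end

section
/- Rank-2 classification: let α, β be linearly independent vectors with B(α,α) = B(β,β) = 1, acting by B-reflections s_α, s_β, and let E be the set of accumulation points of normalized roots of the group W = ⟨s_α, s_β⟩. Then: if B(α,β) > −1, E is empty; if B(α,β) = −1, E consists of exactly one point, namely the normalization of α + β; if B(α,β) < −1, E consists of exactly two points, the two normalized isotropic points on the line through α̂ and β̂. -/
open Filter

namespace Stmt15Aux

def vseq (b : ℝ) : ℕ → ℝ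
  | 0 => 0
  | 1 => 1
  | (n+2) => -(2*b) * vseq b (n+1) - vseq b n

noncomputable def useq (b : ℝ) (n : ℤ) : ℝ :=
  if 0 ≤ n then vseq b n.toNat else -(vseq b (-n).toNat)

@[simp] lemma useq_natCast (b : ℝ) (m : ℕ) : useq b m = vseq b m := by
  simp [useq]

@[simp] lemma useq_zero (b : ℝ) : useq b 0 = 0 := by simp [useq, vseq]

@[simp] lemma useq_one (b : ℝ) : useq b 1 = 1 := by
  have : useq b (1:ℕ) = vseq b 1 := useq_natCast b 1
  simpa [vseq] using this

@[simp] lemma useq_neg (b : ℝ) (n : ℤ) : useq b (-n) = -useq b n := by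
  rcases lt_trichotomy n 0 with h | h | h
  · have h1 : ¬ (0 ≤ n) := not_le.mpr h
    have h2 : 0 ≤ -n := by omega
    simp [useq, h1, h2]; intro h'; omega
  · simp [h]
  · have h1 : 0 ≤ n := le_of_lt h
    have h2 : ¬ (0 ≤ -n) := by omega
    simp [useq, h1, h2]; intro h'; omega

lemma useq_rec_nat (b : ℝ) (m : ℕ) :
    useq b ((m:ℤ)+2) = -(2*b) * useq b ((m:ℤ)+1) - useq b m := by
  have e2 : ((m:ℤ)+2) = ((m+2 : ℕ) : ℤ) := by push_cast; ring
  have e1 : ((m:ℤ)+1) = ((m+1 : ℕ) : ℤ) := by push_cast; ring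
  rw [e2, e1, useq_natCast, useq_natCast, useq_natCast]
  rfl

lemma useq_rec (b : ℝ) (n : ℤ) :
    useq b (n+1) = -(2*b) * useq b n - useq b (n-1) := by
  rcases le_or_gt 1 n with h | h
  · obtain ⟨m, rfl⟩ : ∃ m : ℕ, n = (m:ℤ) + 1 := ⟨(n-1).toNat, by omega⟩
    have := useq_rec_nat b m
    have e : (m:ℤ) + 1 + 1 = (m:ℤ) + 2 := by ring
    rw [e, this]
    simp
  rcases le_or_gt n 0 with h0 | h0
  swap
  · omega
  rcases eq_or_lt_of_le h0 with rfl | h0'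
  · simp
  · -- n ≤ -1 : use oddness
    obtain ⟨j, rfl⟩ : ∃ j : ℕ, n = -((j:ℤ) + 1) := ⟨(-n-1).toNat, by omega⟩
    have hrec := useq_rec_nat b j
    have e1 : -((j:ℤ)+1) + 1 = -(j:ℤ) := by ring
    have e2 : -((j:ℤ)+1) - 1 = -((j:ℤ)+2) := by ring
    rw [e1, e2, useq_neg, useq_neg, useq_neg]
    rw [hrec]
    ring

lemma useq_eqOn (b : ℝ) (F : ℤ → ℝ) (h0 : F 0 = 0) (h1 : F 1 = 1)
    (hrec : ∀ n : ℤ, F (n+1) = -(2*b) * F n - F (n-1)) : ∀ n : ℤ, useq b n = F n := by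
  have key : ∀ n : ℕ, (useq b n = F n ∧ useq b (n+1) = F (n+1)) ∧
      (useq b (-n) = F (-n) ∧ useq b (-n+1) = F (-n+1)) := by
    intro n
    induction n with
    | zero => simp [h0, h1]
    | succ k ih =>
      obtain ⟨⟨ha, hb'⟩, ⟨hc, hd⟩⟩ := ih
      constructor
      · refine ⟨hb', ?_⟩
        have e : ((k:ℤ)+1)+1 = ((k+1:ℕ):ℤ)+1 := by push_cast; ring
        have h2 := useq_rec b ((k:ℤ)+1)
        have h3 := hrec ((k:ℤ)+1)
        have e2 : (k:ℤ)+1-1 = (k:ℤ) := by ring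
        rw [e2] at h2 h3
        push_cast
        rw [h2, h3, ha, hb']
      · constructor
        · -- useq b (-(k+1)) = F (-(k+1)) :  from rec at n = -k : F(-k+1) = ... F(-k) .. F(-k-1)
          have h2 := useq_rec b (-(k:ℤ))
          have h3 := hrec (-(k:ℤ))
          have hu : useq b (-(k:ℤ) - 1) = -(2*b) * useq b (-(k:ℤ)) - useq b (-(k:ℤ)+1) := by
            linarith [h2]
          have hF : F (-(k:ℤ) - 1) = -(2*b) * F (-(k:ℤ)) - F (-(k:ℤ)+1) := by
            linarith [h3]
          have e : (-(((k:ℕ)+1:ℕ)):ℤ) = -(k:ℤ) - 1 := by push_cast; ring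
          rw [e, hu, hF, hc, hd]
        · have e : (-(((k:ℕ)+1:ℕ)):ℤ) + 1 = -(k:ℤ) := by push_cast; ring
          rw [e]
          exact hc
  intro n
  rcases le_or_gt 0 n with h | h
  · obtain ⟨m, rfl⟩ : ∃ m : ℕ, n = (m:ℤ) := ⟨n.toNat, by omega⟩
    exact (key m).1.1
  · obtain ⟨m, rfl⟩ : ∃ m : ℕ, n = -(m:ℤ) := ⟨(-n).toNat, by omega⟩
    exact (key m).2.1

end Stmt15Aux

namespace Stmt15Aux

variable {V : Type*} [AddCommGroup V] [Module ℝ V]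

noncomputable def rv (α β : V) (b : ℝ) (n : ℤ) : V := useq b (n+1) • α + useq b n • β
noncomputable def rw' (α β : V) (b : ℝ) (n : ℤ) : V := useq b n • α + useq b (n+1) • β

variable {α β : V} {Bf : V →ₗ[ℝ] V →ₗ[ℝ] ℝ} {b : ℝ}

lemma Bfαc (hαα : Bf α α = 1) (hb : Bf α β = b) (x y : ℝ) :
    Bf α (x • α + y • β) = x + b * y := by
  simp [map_add, map_smul, hαα, hb, smul_eq_mul]; ring

lemma Bfβc (hββ : Bf β β = 1) (hba : Bf β α = b) (x y : ℝ) :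
    Bf β (x • α + y • β) = b * x + y := by
  simp [map_add, map_smul, hββ, hba, smul_eq_mul]; ring

lemma sA_rv (hαα : Bf α α = 1) (hb : Bf α β = b) (n : ℤ) :
    rv α β b n - (2 * Bf α (rv α β b n)) • α = rw' α β b (n-1) := by
  rw [rv, rw', Bfαc hαα hb]
  have h := useq_rec b n
  have e : n - 1 + 1 = n := by ring
  rw [e]
  match_scalars <;> linarith

lemma sA_rw (hαα : Bf α α = 1) (hb : Bf α β = b) (n : ℤ) :
    rw' α β b n - (2 * Bf α (rw' α β b n)) • α = rv α β b (n+1) := by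
  rw [rv, rw', Bfαc hαα hb]
  have h := useq_rec b (n+1)
  have e : n + 1 - 1 = n := by ring
  rw [e] at h
  match_scalars <;> linarith

lemma sB_rv (hββ : Bf β β = 1) (hba : Bf β α = b) (n : ℤ) :
    rv α β b n - (2 * Bf β (rv α β b n)) • β = rw' α β b (n+1) := by
  rw [rv, rw', Bfβc hββ hba]
  have h := useq_rec b (n+1)
  have e : n + 1 - 1 = n := by ring
  rw [e] at h
  match_scalars <;> linarith

lemma sB_rw (hββ : Bf β β = 1) (hba : Bf β α = b) (n : ℤ) :
    rw' α β b n - (2 * Bf β (rw' α β b n)) • β = rv α β b (n-1) := by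
  rw [rv, rw', Bfβc hββ hba]
  have h := useq_rec b n
  have e : n - 1 + 1 = n := by ring
  rw [e]
  match_scalars <;> linarith

@[simp] lemma rv_zero : rv α β b 0 = α := by simp [rv]

@[simp] lemma rw_zero : rw' α β b 0 = β := by simp [rw']

lemma phi_eq (hαα : Bf α α = 1) (hββ : Bf β β = 1) (hb : Bf α β = b) (hba : Bf β α = b) :
    {v : V | ∀ S : Set V, α ∈ S → β ∈ S →
        (∀ u ∈ S, u - (2 * Bf α u) • α ∈ S) → (∀ u ∈ S, u - (2 * Bf β u) • β ∈ S) → v ∈ S}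
      = Set.range (rv α β b) ∪ Set.range (rw' α β b) := by
  apply Set.Subset.antisymm
  · intro v hv
    refine hv _ (Or.inl ⟨0, rv_zero⟩) (Or.inr ⟨0, rw_zero⟩) ?_ ?_
    · rintro u (⟨n, rfl⟩ | ⟨n, rfl⟩)
      · exact Or.inr ⟨n - 1, (sA_rv hαα hb n).symm⟩
      · exact Or.inl ⟨n + 1, (sA_rw hαα hb n).symm⟩
    · rintro u (⟨n, rfl⟩ | ⟨n, rfl⟩)
      · exact Or.inr ⟨n + 1, (sB_rv hββ hba n).symm⟩
      · exact Or.inl ⟨n - 1, (sB_rw hββ hba n).symm⟩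
  · have key : ∀ (S : Set V), α ∈ S → β ∈ S →
        (∀ u ∈ S, u - (2 * Bf α u) • α ∈ S) → (∀ u ∈ S, u - (2 * Bf β u) • β ∈ S) →
        ∀ n : ℤ, rv α β b n ∈ S ∧ rw' α β b n ∈ S := by
      intro S hα hβ hsA hsB n
      induction n using Int.induction_on with
      | zero => exact ⟨by simpa using hα, by simpa using hβ⟩
      | succ k ih =>
        refine ⟨?_, ?_⟩
        · have := hsA _ ih.2; rwa [sA_rw hαα hb] at this
        · have := hsB _ ih.1; rwa [sB_rv hββ hba] at this
      | pred k ih =>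
        refine ⟨?_, ?_⟩
        · have := hsB _ ih.2
          rw [sB_rw hββ hba] at this
          convert this using 2
        · have := hsA _ ih.1
          rw [sA_rv hαα hb] at this
          convert this using 2
    rintro v (⟨n, rfl⟩ | ⟨n, rfl⟩) S hα hβ hsA hsB
    · exact (key S hα hβ hsA hsB n).1
    · exact (key S hα hβ hsA hsB n).2

end Stmt15Aux

namespace Stmt15Aux

open Filter Topology

lemma not_accPt_finite {X : Type*} [TopologicalSpace X] [T1Space X] {C : Set X}
    (hC : C.Finite) (x : X) : ¬ AccPt x (Filter.principal C) := by
  intro h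
  rw [accPt_iff_nhds] at h
  have hclosed : IsClosed (C \ {x}) := (hC.subset Set.diff_subset).isClosed
  have hU : (C \ {x})ᶜ ∈ 𝓝 x := hclosed.isOpen_compl.mem_nhds (by simp)
  obtain ⟨y, ⟨hyU, hyC⟩, hyx⟩ := h _ hU
  exact hyU ⟨hyC, hyx⟩

lemma accPt_of_tendsto {X : Type*} [TopologicalSpace X] {N : Set X} (g : ℕ → X) (p : X)
    (hg : Filter.Tendsto g Filter.atTop (𝓝 p)) (hne : ∀ n, g n ≠ p) (hmem : ∀ n, g n ∈ N) :
    AccPt p (Filter.principal N) := by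
  rw [accPt_iff_nhds]
  intro U hU
  obtain ⟨n, hn⟩ := (hg.eventually (eventually_mem_nhds_iff.mpr hU)).exists
  exact ⟨g n, ⟨mem_of_mem_nhds hn, hmem n⟩, hne n⟩

lemma accPt_pair {X : Type*} [MetricSpace X] {N : Set X} {p q : X}
    (hfin : ∀ ε : ℝ, 0 < ε → (N \ (Metric.ball p ε ∪ Metric.ball q ε)).Finite)
    {x : X} (hx : AccPt x (Filter.principal N)) : x = p ∨ x = q := by
  by_contra hcon
  push_neg at hcon
  obtain ⟨hxp, hxq⟩ := hcon
  set ε : ℝ := min (dist x p) (dist x q) / 2 with hε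
  have hε0 : 0 < ε := by
    have h1 : 0 < dist x p := dist_pos.mpr hxp
    have h2 : 0 < dist x q := dist_pos.mpr hxq
    positivity
  set B := Metric.ball x ε with hB
  have hsub : N ∩ B ⊆ N \ (Metric.ball p ε ∪ Metric.ball q ε) := by
    rintro y ⟨hyN, hyB⟩
    refine ⟨hyN, ?_⟩
    rintro (hyp | hyq)
    · have : dist x p ≤ dist x y + dist y p := dist_triangle x y p
      rw [Metric.mem_ball] at hyp hyB
      rw [dist_comm x y] at this
      have : dist x p < 2 * ε := by linarith
      have : dist x p ≤ 2 * ε - dist x p := by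
        have := min_le_left (dist x p) (dist x q)
        simp only [hε] at *
        linarith
      linarith [dist_pos.mpr hxp, min_le_left (dist x p) (dist x q)]
    · rw [Metric.mem_ball] at hyq hyB
      have ht := dist_triangle x y q
      rw [dist_comm x y] at ht
      have h2 : dist x q < 2 * ε := by linarith
      have := min_le_right (dist x p) (dist x q)
      simp only [hε] at h2
      linarith
  have hfin2 : (N ∩ B).Finite := (hfin ε hε0).subset hsub
  have hBnhds : B ∈ 𝓝 x := Metric.ball_mem_nhds x hε0
  have hle : 𝓝[≠] x ⊓ Filter.principal N ≤ 𝓝[≠] x ⊓ Filter.principal (N ∩ B) := by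
    refine le_inf inf_le_left ?_
    rw [← Filter.inf_principal]
    refine le_inf inf_le_right ?_
    exact le_trans inf_le_left (le_principal_iff.mpr (mem_nhdsWithin_of_mem_nhds hBnhds))
  have : AccPt x (Filter.principal (N ∩ B)) := Filter.NeBot.mono hx hle
  exact not_accPt_finite hfin2 x this

lemma finite_outside {X : Type*} (g : ℤ → X) {U : Set X}
    (hU : ∀ᶠ n in Filter.atTop, g n ∈ U) (hV : ∀ᶠ n in Filter.atBot, g n ∈ U) :
    {n : ℤ | g n ∉ U}.Finite := by
  have : ∀ᶠ n in Filter.cofinite, g n ∈ U := by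
    rw [Int.cofinite_eq, Filter.eventually_sup]
    exact ⟨hV, hU⟩
  rwa [Filter.eventually_cofinite] at this

end Stmt15Aux

namespace Stmt15Aux

open Filter Topology

lemma tendsto_toNat : Filter.Tendsto Int.toNat Filter.atTop Filter.atTop :=
  Filter.tendsto_atTop_atTop.mpr fun m => ⟨(m:ℤ), fun n hn => by omega⟩

lemma tendsto_zpow_int_atTop {l : ℝ} (hl : 1 < l) :
    Filter.Tendsto (fun n : ℤ => l ^ n) Filter.atTop Filter.atTop := by
  have h1 : Filter.Tendsto (fun m : ℕ => l ^ m) Filter.atTop Filter.atTop :=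
    tendsto_pow_atTop_atTop_of_one_lt hl
  have h2 := h1.comp tendsto_toNat
  refine h2.congr' ?_
  filter_upwards [Filter.eventually_ge_atTop (0:ℤ)] with n hn
  simp only [Function.comp_apply]
  rw [← zpow_natCast]
  congr 1
  omega

lemma tendsto_inv_zpow_int {l : ℝ} (hl : 1 < l) :
    Filter.Tendsto (fun n : ℤ => (l ^ n)⁻¹) Filter.atTop (nhds 0) :=
  (tendsto_zpow_int_atTop hl).inv_tendsto_atTop

lemma periodic_range_finite {X : Type*} (g : ℤ → X) (T : ℤ) (hT : 0 < T)
    (hg : ∀ n, g (n + T) = g n) : (Set.range g).Finite := by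
  have hmul : ∀ d : ℤ, ∀ n, g (n + T * d) = g n := by
    intro d
    induction d using Int.induction_on with
    | zero => simp
    | succ k ih =>
      intro n
      have : n + T * ((k:ℤ) + 1) = (n + T * k) + T := by ring
      rw [this, hg, ih]
    | pred k ih =>
      intro n
      have e : n + T * (-(k:ℤ) - 1) + T = n + T * (-(k:ℤ)) := by ring
      have h2 := hg (n + T * (-(k:ℤ) - 1))
      rw [e] at h2
      rw [← h2, ih n]
  have hsub : Set.range g ⊆ g '' (Set.Ico 0 T) := by
    rintro x ⟨n, rfl⟩
    refine ⟨n % T, ⟨Int.emod_nonneg n hT.ne', Int.emod_lt_of_pos n hT⟩, ?_⟩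
    have : n = n % T + T * (n / T) := by linarith [Int.mul_ediv_add_emod n T]
    conv_rhs => rw [this]
    rw [hmul]
  exact ((Set.finite_Ico 0 T).image g).subset hsub

lemma indep_coords {V : Type*} [AddCommGroup V] [Module ℝ V] {α β : V}
    (hind : LinearIndependent ℝ ![α, β]) {x y x' y' : ℝ}
    (h : x • α + y • β = x' • α + y' • β) : x = x' ∧ y = y' := by
  rw [Fintype.linearIndependent_iff] at hind
  have hz : (x - x') • α + (y - y') • β = 0 := by
    rw [sub_smul, sub_smul]
    rw [sub_add_sub_comm, h, sub_self]
  have := hind ![x - x', y - y'] (by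
    simpa [Fin.sum_univ_two] using hz)
  constructor
  · have h0 := this 0
    simp at h0
    linarith [sub_eq_zero.mp (by simpa using h0)]
  · have h1 := this 1
    simp at h1
    linarith [sub_eq_zero.mp (by simpa using h1)]

end Stmt15Aux

namespace Stmt15Aux

lemma useq_neg_one : ∀ n : ℤ, useq (-1) n = (n : ℝ) := by
  apply useq_eqOn
  · simp
  · simp
  · intro n
    push_cast
    ring

section Cos

lemma useq_cos {b : ℝ} {k : ℕ} (hk : 1 < k) (hb : b = -Real.cos (Real.pi / k)) :
    ∀ n : ℤ, useq b n = Real.sin (n * (Real.pi / k)) / Real.sin (Real.pi / k) := by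
  have hθpos : 0 < Real.pi / k := by positivity
  have hθlt : Real.pi / k < Real.pi := by
    rw [div_lt_iff₀ (by positivity)]
    nlinarith [Real.pi_pos, show (2:ℝ) ≤ (k:ℝ) by exact_mod_cast hk]
  have hsin : 0 < Real.sin (Real.pi / k) := Real.sin_pos_of_pos_of_lt_pi hθpos hθlt
  apply useq_eqOn
  · simp
  · rw [Int.cast_one, one_mul, div_self hsin.ne']
  · intro n
    set θ := Real.pi / k
    have e1 : ((n:ℝ)+1) * θ = n * θ + θ := by push_cast; ring
    have e2 : ((n:ℝ)-1) * θ = n * θ - θ := by push_cast; ring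
    push_cast
    rw [e1, e2, Real.sin_add, Real.sin_sub, hb]
    field_simp
    ring

lemma useq_cos_periodic {b : ℝ} {k : ℕ} (hk : 1 < k) (hb : b = -Real.cos (Real.pi / k)) :
    ∀ n : ℤ, useq b (n + 2 * k) = useq b n := by
  intro n
  rw [useq_cos hk hb, useq_cos hk hb]
  congr 1
  have hk0 : (k:ℝ) ≠ 0 := by positivity
  have e : ((n + 2*(k:ℤ) : ℤ) : ℝ) * (Real.pi / k) = n * (Real.pi / k) + 2 * Real.pi := by
    push_cast
    field_simp
  rw [e, Real.sin_add_two_pi]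

end Cos

section Lam

noncomputable def lam (b : ℝ) : ℝ := -b + Real.sqrt (b^2 - 1)

lemma lam_gt {b : ℝ} (hb : b < -1) : 1 < lam b := by
  have h1 : (0:ℝ) ≤ Real.sqrt (b^2 - 1) := Real.sqrt_nonneg _
  have : 1 < -b := by linarith
  unfold lam; linarith

lemma lam_quad {b : ℝ} (hb : b < -1) : lam b ^ 2 + 2 * b * lam b + 1 = 0 := by
  have h1 : (0:ℝ) ≤ b^2 - 1 := by nlinarith
  have h2 : Real.sqrt (b^2-1) ^ 2 = b^2 - 1 := Real.sq_sqrt h1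
  unfold lam
  nlinarith [h2]

lemma useq_lam {b : ℝ} (hb : b < -1) :
    ∀ n : ℤ, useq b n = (lam b ^ n - lam b ^ (-n)) / (lam b - (lam b)⁻¹) := by
  have hl : 1 < lam b := lam_gt hb
  have hl0 : lam b ≠ 0 := by linarith
  have hinv : (lam b)⁻¹ < 1 := by
    rw [inv_lt_one_iff₀]; right; exact hl
  have hD : lam b - (lam b)⁻¹ ≠ 0 := by
    have : (lam b)⁻¹ < lam b := lt_trans hinv hl
    linarith
  apply useq_eqOn
  · simp
  · rw [zpow_one, zpow_neg, zpow_one, div_self hD]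
  · intro n
    have hq := lam_quad hb
    have e1 : ∀ m : ℤ, lam b ^ (m + 1) = lam b ^ m * lam b := fun m => zpow_add_one₀ hl0 m
    have e2 : ∀ m : ℤ, lam b ^ (m - 1) = lam b ^ m * (lam b)⁻¹ := fun m => zpow_sub_one₀ hl0 m
    have e3 : lam b ^ (-(n+1)) = (lam b ^ n)⁻¹ * (lam b)⁻¹ := by
      rw [neg_add, ← sub_eq_add_neg, e2, zpow_neg]
    have e4 : lam b ^ (-(n-1)) = (lam b ^ n)⁻¹ * lam b := by
      rw [show -(n-1) = -n + 1 by ring, e1, zpow_neg]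
    have hX : lam b ^ n ≠ 0 := zpow_ne_zero n hl0
    rw [e1, e2, e3, e4, zpow_neg]
    have h2b : 2 * b = -(lam b + (lam b)⁻¹) := by
      field_simp
      nlinarith [hq]
    rw [h2b]
    field_simp
    ring
end Lam

end Stmt15Aux

namespace Stmt15Aux

open Filter Topology

noncomputable def sseq (b : ℝ) (n : ℤ) : ℝ := useq b (n+1) + useq b n
noncomputable def Aseq (b : ℝ) (n : ℤ) : ℝ := useq b (n+1) / sseq b n
noncomputable def Cseq (b : ℝ) (n : ℤ) : ℝ := useq b n / sseq b n

lemma sseq_reflect (b : ℝ) (n : ℤ) : sseq b (-n-1) = -sseq b n := by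
  unfold sseq
  have e1 : -n - 1 + 1 = -n := by ring
  have e2 : -n - 1 = -(n+1) := by ring
  rw [e1, e2, useq_neg, useq_neg]
  ring

variable {V : Type*} [AddCommGroup V] [Module ℝ V] {α β : V}

lemma rv_reflect (b : ℝ) (n : ℤ) : rv α β b (-n-1) = -(rw' α β b n) := by
  unfold rv rw'
  have e1 : -n - 1 + 1 = -n := by ring
  have e2 : -n - 1 = -(n+1) := by ring
  rw [e1, e2, useq_neg, useq_neg]
  module

lemma norm_rv (b : ℝ) (n : ℤ) :
    (sseq b n)⁻¹ • rv α β b n = Aseq b n • α + Cseq b n • β := by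
  unfold rv Aseq Cseq
  rw [smul_add, smul_smul, smul_smul, div_eq_inv_mul, div_eq_inv_mul]

lemma norm_rw (b : ℝ) (n : ℤ) :
    (sseq b n)⁻¹ • rw' α β b n = Cseq b n • α + Aseq b n • β := by
  unfold rw' Aseq Cseq
  rw [smul_add, smul_smul, smul_smul, div_eq_inv_mul, div_eq_inv_mul]

section LimitsAffine

lemma sseq_neg_one (n : ℤ) : sseq (-1) n = 2*(n:ℝ) + 1 := by
  unfold sseq; rw [useq_neg_one, useq_neg_one]; push_cast; ring

lemma sseq_neg_one_ne (n : ℤ) : sseq (-1) n ≠ 0 := by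
  rw [sseq_neg_one]
  intro h
  have : (2*n + 1 : ℤ) ≠ 0 := by omega
  exact this (by exact_mod_cast (by push_cast at h ⊢; linarith : ((2*n+1 : ℤ):ℝ) = 0))

lemma Aseq_neg_one (n : ℤ) : Aseq (-1) n = ((n:ℝ)+1) / (2*n+1) := by
  unfold Aseq; rw [useq_neg_one, sseq_neg_one]; push_cast; ring_nf

lemma Cseq_neg_one (n : ℤ) : Cseq (-1) n = (n:ℝ) / (2*n+1) := by
  unfold Cseq; rw [useq_neg_one, sseq_neg_one]

lemma tendsto_inv_linear (a c : ℝ) (ha : 0 < a) :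
    Filter.Tendsto (fun n : ℤ => (a * (n:ℝ) + c)⁻¹) Filter.atTop (nhds 0) := by
  apply Filter.Tendsto.inv_tendsto_atTop
  apply Filter.tendsto_atTop_add_const_right
  exact (tendsto_intCast_atTop_atTop (R := ℝ)).const_mul_atTop ha

lemma tendsto_Aseq_neg_one :
    Filter.Tendsto (Aseq (-1)) Filter.atTop (nhds (2⁻¹ : ℝ)) := by
  have key : ∀ᶠ n : ℤ in Filter.atTop, Aseq (-1) n = 2⁻¹ + 2⁻¹ * (2*(n:ℝ)+1)⁻¹ := by
    filter_upwards [Filter.eventually_ge_atTop (0:ℤ)] with n hn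
    rw [Aseq_neg_one]
    have h1 : (2*(n:ℝ)+1) ≠ 0 := by
      have : (0:ℝ) ≤ n := by exact_mod_cast hn
      positivity
    field_simp
    ring
  rw [show (2⁻¹:ℝ) = 2⁻¹ + 2⁻¹ * 0 by ring]
  exact Filter.Tendsto.congr' (key.mono fun n h => h.symm) (by exact
    (tendsto_const_nhds.add (tendsto_const_nhds.mul (tendsto_inv_linear 2 1 (by norm_num)))))

lemma tendsto_Cseq_neg_one :
    Filter.Tendsto (Cseq (-1)) Filter.atTop (nhds (2⁻¹ : ℝ)) := by
  have key : ∀ᶠ n : ℤ in Filter.atTop, Cseq (-1) n = 2⁻¹ - 2⁻¹ * (2*(n:ℝ)+1)⁻¹ := by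
    filter_upwards [Filter.eventually_ge_atTop (0:ℤ)] with n hn
    rw [Cseq_neg_one]
    have h1 : (2*(n:ℝ)+1) ≠ 0 := by
      have : (0:ℝ) ≤ n := by exact_mod_cast hn
      positivity
    field_simp
    ring
  rw [show (2⁻¹:ℝ) = 2⁻¹ - 2⁻¹ * 0 by ring]
  exact Filter.Tendsto.congr' (key.mono fun n h => h.symm) (by exact
    (tendsto_const_nhds.sub (tendsto_const_nhds.mul (tendsto_inv_linear 2 1 (by norm_num)))))

lemma Aseq_neg_one_ne (n : ℤ) (hn : 0 ≤ n) : Aseq (-1) n ≠ 2⁻¹ := by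
  rw [Aseq_neg_one]
  intro h
  have h1 : (2*(n:ℝ)+1) ≠ 0 := by
    have : (0:ℝ) ≤ n := by exact_mod_cast hn
    positivity
  field_simp at h
  linarith

end LimitsAffine

end Stmt15Aux

namespace Stmt15Aux

open Filter Topology

section LimitsLam

variable {b : ℝ}

noncomputable def DEN (b : ℝ) (n : ℤ) : ℝ := (lam b + 1) * (lam b ^ n)^2 - ((lam b)⁻¹ + 1)

lemma lam_facts (hb : b < -1) :
    1 < lam b ∧ lam b ≠ 0 ∧ (lam b)⁻¹ < 1 ∧ 0 < lam b - (lam b)⁻¹ ∧ lam b + 1 ≠ 0 := by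
  have hl := lam_gt hb
  have hl0 : lam b ≠ 0 := by linarith
  have hinv : (lam b)⁻¹ < 1 := by rw [inv_lt_one_iff₀]; right; exact hl
  exact ⟨hl, hl0, hinv, by linarith [lt_trans hinv hl], by linarith⟩

lemma DEN_pos (hb : b < -1) {n : ℤ} (hn : 0 ≤ n) : 0 < DEN b n := by
  obtain ⟨hl, hl0, hinv, hD, hl1⟩ := lam_facts hb
  have hX : 1 ≤ lam b ^ n := one_le_zpow₀ hl.le hn
  have hX2 : 1 ≤ (lam b ^ n)^2 := by nlinarith
  unfold DEN
  nlinarith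

lemma sseq_eq_lam (hb : b < -1) (n : ℤ) :
    sseq b n = (lam b * lam b ^ n + lam b ^ n - (lam b * lam b ^ n)⁻¹ - (lam b ^ n)⁻¹) /
      (lam b - (lam b)⁻¹) := by
  obtain ⟨hl, hl0, hinv, hD, hl1⟩ := lam_facts hb
  unfold sseq
  rw [useq_lam hb, useq_lam hb]
  have e1 : lam b ^ (n+1) = lam b * lam b ^ n := by
    rw [zpow_add_one₀ hl0]; ring
  have e2 : lam b ^ (-(n+1)) = (lam b * lam b ^ n)⁻¹ := by
    rw [zpow_neg, e1]
  rw [e1, e2, zpow_neg]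
  ring

lemma sseq_pos_lam (hb : b < -1) {n : ℤ} (hn : 0 ≤ n) : 0 < sseq b n := by
  obtain ⟨hl, hl0, hinv, hD, hl1⟩ := lam_facts hb
  have hX : 1 ≤ lam b ^ n := one_le_zpow₀ hl.le hn
  have hlX : 1 < lam b * lam b ^ n := by nlinarith
  have hXinv : (lam b ^ n)⁻¹ ≤ 1 := inv_le_one_of_one_le₀ hX
  have hlXinv : (lam b * lam b ^ n)⁻¹ < 1 := by
    rw [inv_lt_one_iff₀]; right; exact hlX
  have hXi : (lam b ^ n)⁻¹ ≤ lam b ^ n := le_trans hXinv hX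
  have hlXi : (lam b * lam b ^ n)⁻¹ < lam b * lam b ^ n := lt_trans hlXinv hlX
  rw [sseq_eq_lam hb]
  apply div_pos _ hD
  linarith

lemma sseq_ne_lam (hb : b < -1) (n : ℤ) : sseq b n ≠ 0 := by
  rcases le_or_gt 0 n with h | h
  · exact (sseq_pos_lam hb h).ne'
  · have h2 : 0 ≤ -n - 1 := by omega
    have := sseq_pos_lam hb h2
    rw [sseq_reflect] at this
    intro hc
    rw [hc] at this
    simp at this

lemma snum_pos (hb : b < -1) {n : ℤ} (hn : 0 ≤ n) :
    0 < lam b * lam b ^ n + lam b ^ n - (lam b * lam b ^ n)⁻¹ - (lam b ^ n)⁻¹ := by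
  obtain ⟨hl, hl0, hinv, hD, hl1⟩ := lam_facts hb
  have := sseq_pos_lam hb hn
  rw [sseq_eq_lam hb] at this
  have h2 := (div_pos_iff.mp this)
  rcases h2 with ⟨h3, _⟩ | ⟨_, h4⟩
  · exact h3
  · linarith

lemma ratioA_identity (l X : ℝ) (hl : 1 < l) (hX : 1 ≤ X)
    (hsn : l*X + X - (l*X)⁻¹ - X⁻¹ ≠ 0)
    (hDEN : (l+1)*X^2 - (l⁻¹+1) ≠ 0) :
    (l*X - (l*X)⁻¹) / (l*X + X - (l*X)⁻¹ - X⁻¹)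
      = l/(l+1) + (l - l⁻¹)/((l+1)*((l+1)*X^2 - (l⁻¹+1))) := by
  have hl0 : l ≠ 0 := by linarith
  have hX0 : X ≠ 0 := by linarith
  have hl1 : l + 1 ≠ 0 := by linarith
  have hsn' : l^2*X^2 + l*X^2 - 1 - l ≠ 0 := by
    intro hc
    apply hsn
    field_simp
    linear_combination hc
  rw [show l*X + X - (l*X)⁻¹ - X⁻¹ = (l^2*X^2 + l*X^2 - 1 - l)/(l*X) by field_simp]
  rw [show l*X - (l*X)⁻¹ = (l^2*X^2 - 1)/(l*X) by field_simp]
  rw [show (l+1)*X^2 - (l⁻¹+1) = (l^2*X^2 + l*X^2 - 1 - l)/l by field_simp; ring]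
  rw [div_div_div_cancel_right₀]
  case hc => positivity
  rw [div_add_div _ _ hl1 (mul_ne_zero hl1 (div_ne_zero hsn' hl0)), div_eq_div_iff hsn' (mul_ne_zero hl1 (mul_ne_zero hl1 (div_ne_zero hsn' hl0)))]
  field_simp
  ring

lemma ratioC_identity (l X : ℝ) (hl : 1 < l) (hX : 1 ≤ X)
    (hsn : l*X + X - (l*X)⁻¹ - X⁻¹ ≠ 0)
    (hDEN : (l+1)*X^2 - (l⁻¹+1) ≠ 0) :
    (X - X⁻¹) / (l*X + X - (l*X)⁻¹ - X⁻¹)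
      = 1/(l+1) - (l - l⁻¹)/((l+1)*((l+1)*X^2 - (l⁻¹+1))) := by
  have hl0 : l ≠ 0 := by linarith
  have hX0 : X ≠ 0 := by linarith
  have hl1 : l + 1 ≠ 0 := by linarith
  have hsn' : l^2*X^2 + l*X^2 - 1 - l ≠ 0 := by
    intro hc
    apply hsn
    field_simp
    linear_combination hc
  rw [show l*X + X - (l*X)⁻¹ - X⁻¹ = (l^2*X^2 + l*X^2 - 1 - l)/(l*X) by field_simp]
  rw [show X - X⁻¹ = (l*X^2 - l)/(l*X) by field_simp]
  rw [show (l+1)*X^2 - (l⁻¹+1) = (l^2*X^2 + l*X^2 - 1 - l)/l by field_simp; ring]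
  rw [div_div_div_cancel_right₀]
  case hc => positivity
  rw [div_sub_div _ _ hl1 (mul_ne_zero hl1 (div_ne_zero hsn' hl0)), div_eq_div_iff hsn' (mul_ne_zero hl1 (mul_ne_zero hl1 (div_ne_zero hsn' hl0)))]
  field_simp
  ring

lemma Aseq_eq_lam (hb : b < -1) {n : ℤ} (hn : 0 ≤ n) :
    Aseq b n = lam b / (lam b + 1) +
      (lam b - (lam b)⁻¹) / ((lam b + 1) * DEN b n) := by
  obtain ⟨hl, hl0, hinv, hD, hl1⟩ := lam_facts hb
  have hX : 1 ≤ lam b ^ n := one_le_zpow₀ hl.le hn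
  have hsn := (snum_pos hb hn).ne'
  have hDEN := (DEN_pos hb hn).ne'
  unfold Aseq
  rw [useq_lam hb, sseq_eq_lam hb]
  have e1 : lam b ^ (n+1) = lam b * lam b ^ n := by rw [zpow_add_one₀ hl0]; ring
  have e2 : lam b ^ (-(n+1)) = (lam b * lam b ^ n)⁻¹ := by rw [zpow_neg, e1]
  rw [e1, e2]
  rw [div_div_div_cancel_right₀]
  case hc => exact hD.ne'
  unfold DEN at hDEN ⊢
  exact ratioA_identity (lam b) (lam b ^ n) hl hX hsn hDEN

lemma Cseq_eq_lam (hb : b < -1) {n : ℤ} (hn : 0 ≤ n) :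
    Cseq b n = 1 / (lam b + 1) -
      (lam b - (lam b)⁻¹) / ((lam b + 1) * DEN b n) := by
  obtain ⟨hl, hl0, hinv, hD, hl1⟩ := lam_facts hb
  have hX : 1 ≤ lam b ^ n := one_le_zpow₀ hl.le hn
  have hsn := (snum_pos hb hn).ne'
  have hDEN := (DEN_pos hb hn).ne'
  unfold Cseq
  rw [useq_lam hb, sseq_eq_lam hb, zpow_neg]
  rw [div_div_div_cancel_right₀]
  case hc => exact hD.ne'
  unfold DEN at hDEN ⊢
  exact ratioC_identity (lam b) (lam b ^ n) hl hX hsn hDEN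

lemma tendsto_DEN (hb : b < -1) :
    Filter.Tendsto (DEN b) Filter.atTop Filter.atTop := by
  obtain ⟨hl, hl0, hinv, hD, hl1⟩ := lam_facts hb
  have h1 : Filter.Tendsto (fun n : ℤ => (lam b ^ n)^2) Filter.atTop Filter.atTop := by
    have := (tendsto_zpow_int_atTop hl).atTop_mul_atTop₀ (tendsto_zpow_int_atTop hl)
    refine this.congr fun n => ?_
    ring
  have h2 : Filter.Tendsto (fun n : ℤ => (lam b + 1) * (lam b ^ n)^2) Filter.atTop Filter.atTop :=
    h1.const_mul_atTop (by linarith)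
  have h3 := Filter.tendsto_atTop_add_const_right Filter.atTop (-((lam b)⁻¹ + 1)) h2
  refine h3.congr fun n => ?_
  unfold DEN
  ring

lemma tendsto_Aseq_lam (hb : b < -1) :
    Filter.Tendsto (Aseq b) Filter.atTop (nhds (lam b / (lam b + 1))) := by
  obtain ⟨hl, hl0, hinv, hD, hl1⟩ := lam_facts hb
  have key : ∀ᶠ n : ℤ in Filter.atTop,
      lam b / (lam b + 1) + (lam b - (lam b)⁻¹) / ((lam b + 1) * DEN b n) = Aseq b n := by
    filter_upwards [Filter.eventually_ge_atTop (0:ℤ)] with n hn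
    exact (Aseq_eq_lam hb hn).symm
  refine Filter.Tendsto.congr' key ?_
  have h2 : Filter.Tendsto (fun n : ℤ => ((lam b + 1) * DEN b n)⁻¹) Filter.atTop (nhds 0) :=
    ((tendsto_DEN hb).const_mul_atTop (by linarith)).inv_tendsto_atTop
  have h3 := Filter.Tendsto.const_mul (lam b - (lam b)⁻¹) h2
  rw [mul_zero] at h3
  have h4 := Filter.Tendsto.const_add (lam b / (lam b + 1)) h3
  rw [add_zero] at h4
  refine h4.congr fun n => ?_
  ring

lemma tendsto_Cseq_lam (hb : b < -1) :
    Filter.Tendsto (Cseq b) Filter.atTop (nhds (1 / (lam b + 1))) := by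
  obtain ⟨hl, hl0, hinv, hD, hl1⟩ := lam_facts hb
  have key : ∀ᶠ n : ℤ in Filter.atTop,
      1 / (lam b + 1) - (lam b - (lam b)⁻¹) / ((lam b + 1) * DEN b n) = Cseq b n := by
    filter_upwards [Filter.eventually_ge_atTop (0:ℤ)] with n hn
    exact (Cseq_eq_lam hb hn).symm
  refine Filter.Tendsto.congr' key ?_
  have h2 : Filter.Tendsto (fun n : ℤ => ((lam b + 1) * DEN b n)⁻¹) Filter.atTop (nhds 0) :=
    ((tendsto_DEN hb).const_mul_atTop (by linarith)).inv_tendsto_atTop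
  have h3 := Filter.Tendsto.const_mul (lam b - (lam b)⁻¹) h2
  rw [mul_zero] at h3
  have h4 := Filter.Tendsto.const_sub (1 / (lam b + 1)) h3
  rw [sub_zero] at h4
  refine h4.congr fun n => ?_
  ring

lemma Aseq_ne_lam (hb : b < -1) {n : ℤ} (hn : 0 ≤ n) :
    Aseq b n ≠ lam b / (lam b + 1) := by
  obtain ⟨hl, hl0, hinv, hD, hl1⟩ := lam_facts hb
  rw [Aseq_eq_lam hb hn]
  have h2 : 0 < (lam b - (lam b)⁻¹) / ((lam b + 1) * DEN b n) :=
    div_pos hD (mul_pos (by linarith) (DEN_pos hb hn))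
  intro hc
  nlinarith [hc]

end LimitsLam

end Stmt15Aux

namespace Stmt15Aux

open Filter Topology

lemma Aseq_reflect (b : ℝ) (n : ℤ) : Aseq b (-n-1) = Cseq b n := by
  unfold Aseq Cseq
  rw [show -n-1+1 = -n by ring, sseq_reflect, useq_neg, neg_div_neg_eq]

lemma Cseq_reflect (b : ℝ) (n : ℤ) : Cseq b (-n-1) = Aseq b n := by
  unfold Aseq Cseq
  rw [sseq_reflect, show -n-1 = -(n+1) by ring, useq_neg, neg_div_neg_eq]

lemma tendsto_negsub : Filter.Tendsto (fun n : ℤ => -n-1) Filter.atBot Filter.atTop :=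
  Filter.tendsto_atBot_atTop.mpr fun m => ⟨-m-1, fun a ha => by omega⟩

lemma finite_outside_union {X : Type*} [MetricSpace X] (g g' : ℤ → X) (P Q : X)
    (h1 : Filter.Tendsto g Filter.atTop (nhds P)) (h2 : Filter.Tendsto g Filter.atBot (nhds Q))
    (h3 : Filter.Tendsto g' Filter.atTop (nhds Q)) (h4 : Filter.Tendsto g' Filter.atBot (nhds P))
    {ε : ℝ} (hε : 0 < ε) :
    ((Set.range g ∪ Set.range g') \ (Metric.ball P ε ∪ Metric.ball Q ε)).Finite := by
  set U := Metric.ball P ε ∪ Metric.ball Q ε with hU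
  have hPU : Metric.ball P ε ⊆ U := Set.subset_union_left
  have hQU : Metric.ball Q ε ⊆ U := Set.subset_union_right
  have hg1 : ∀ᶠ n in Filter.atTop, g n ∈ U :=
    (h1.eventually (eventually_mem_nhds_iff.mpr (Metric.ball_mem_nhds P hε))).mono
      fun n hn => hPU (mem_of_mem_nhds hn)
  have hg2 : ∀ᶠ n in Filter.atBot, g n ∈ U :=
    (h2.eventually (eventually_mem_nhds_iff.mpr (Metric.ball_mem_nhds Q hε))).mono
      fun n hn => hQU (mem_of_mem_nhds hn)
  have hg3 : ∀ᶠ n in Filter.atTop, g' n ∈ U :=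
    (h3.eventually (eventually_mem_nhds_iff.mpr (Metric.ball_mem_nhds Q hε))).mono
      fun n hn => hQU (mem_of_mem_nhds hn)
  have hg4 : ∀ᶠ n in Filter.atBot, g' n ∈ U :=
    (h4.eventually (eventually_mem_nhds_iff.mpr (Metric.ball_mem_nhds P hε))).mono
      fun n hn => hPU (mem_of_mem_nhds hn)
  have hf1 := finite_outside g hg1 hg2
  have hf2 := finite_outside g' hg3 hg4
  have hsub : (Set.range g ∪ Set.range g') \ U ⊆
      g '' {n | g n ∉ U} ∪ g' '' {n | g' n ∉ U} := by
    rintro x ⟨(⟨n, rfl⟩ | ⟨n, rfl⟩), hx⟩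
    · exact Or.inl ⟨n, hx, rfl⟩
    · exact Or.inr ⟨n, hx, rfl⟩
  exact ((hf1.image g).union (hf2.image g')).subset hsub

lemma Bf_combo {V : Type*} [AddCommGroup V] [Module ℝ V] {α β : V}
    {Bf : V →ₗ[ℝ] V →ₗ[ℝ] ℝ} {b : ℝ}
    (hαα : Bf α α = 1) (hββ : Bf β β = 1) (hb : Bf α β = b) (hba : Bf β α = b) (x y : ℝ) :
    Bf (x • α + y • β) (x • α + y • β) = x^2 + 2*b*x*y + y^2 := by
  simp [map_add, map_smul, smul_eq_mul, hαα, hββ, hb, hba]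
  ring

end Stmt15Aux

namespace Stmt15Aux

variable {V : Type*} [AddCommGroup V] [Module ℝ V] {α β : V} {b : ℝ}

lemma f_rv (f : V →ₗ[ℝ] ℝ) (hfα : f α = 1) (hfβ : f β = 1) (n : ℤ) :
    f (rv α β b n) = sseq b n := by
  unfold rv sseq
  rw [map_add, map_smul, map_smul, hfα, hfβ, smul_eq_mul, smul_eq_mul, mul_one, mul_one]

lemma f_rw (f : V →ₗ[ℝ] ℝ) (hfα : f α = 1) (hfβ : f β = 1) (n : ℤ) :
    f (rw' α β b n) = sseq b n := by
  unfold rw' sseq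
  rw [map_add, map_smul, map_smul, hfα, hfβ, smul_eq_mul, smul_eq_mul, mul_one, mul_one]
  ring

lemma image_norm (f : V →ₗ[ℝ] ℝ) (hfα : f α = 1) (hfβ : f β = 1) :
    (fun ρ => (f ρ)⁻¹ • ρ) '' (Set.range (rv α β b) ∪ Set.range (rw' α β b)) =
      Set.range (fun n : ℤ => Aseq b n • α + Cseq b n • β) ∪
      Set.range (fun n : ℤ => Cseq b n • α + Aseq b n • β) := by
  rw [Set.image_union, ← Set.range_comp, ← Set.range_comp]
  have h1 : ((fun ρ => (f ρ)⁻¹ • ρ) ∘ rv α β b) = fun n : ℤ => Aseq b n • α + Cseq b n • β := by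
    funext n
    simp only [Function.comp_apply]
    rw [f_rv f hfα hfβ, norm_rv]
  have h2 : ((fun ρ => (f ρ)⁻¹ • ρ) ∘ rw' α β b) = fun n : ℤ => Cseq b n • α + Aseq b n • β := by
    funext n
    simp only [Function.comp_apply]
    rw [f_rw f hfα hfβ, norm_rw]
  rw [h1, h2]

end Stmt15Aux

open Matrix Stmt15Aux Filter Topology

/-- Rank-2 classification of accumulation points of normalized roots:
with `b = B(α,β)`, if `b > -1` then `E = ∅`; if `b = -1` then `E` is the single point
`(α+β)/2`; if `b < -1` then `E` consists of exactly two points, the normalized isotropic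
points on the line through `α̂` and `β̂` (the line `{v : f v = 1}`). -/
theorem stmt15 (α β : Fin 2 → ℝ) (hind : LinearIndependent ℝ ![α, β])
    (Bf : (Fin 2 → ℝ) →ₗ[ℝ] (Fin 2 → ℝ) →ₗ[ℝ] ℝ)
    (hsymm : ∀ u v, Bf u v = Bf v u)
    (hαα : Bf α α = 1) (hββ : Bf β β = 1)
    (b : ℝ) (hb : Bf α β = b)
    (hbval : b ≤ -1 ∨ ∃ k : ℕ, 1 < k ∧ b = -Real.cos (Real.pi / k))
    (f : (Fin 2 → ℝ) →ₗ[ℝ] ℝ) (hfα : f α = 1) (hfβ : f β = 1) :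
    let sA : (Fin 2 → ℝ) → (Fin 2 → ℝ) := fun v => v - (2 * Bf α v) • α
    let sB : (Fin 2 → ℝ) → (Fin 2 → ℝ) := fun v => v - (2 * Bf β v) • β
    let Φ : Set (Fin 2 → ℝ) := {v | ∀ S : Set (Fin 2 → ℝ),
      α ∈ S → β ∈ S → (∀ u ∈ S, sA u ∈ S) → (∀ u ∈ S, sB u ∈ S) → v ∈ S}
    let N : Set (Fin 2 → ℝ) := (fun ρ => (f ρ)⁻¹ • ρ) '' Φ
    let E : Set (Fin 2 → ℝ) := {p | AccPt p (Filter.principal N)}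
    (-1 < b → E = ∅) ∧
    (b = -1 → E = {(2:ℝ)⁻¹ • (α + β)}) ∧
    (b < -1 → (E = {v | Bf v v = 0 ∧ f v = 1} ∧
      ∃ p q : Fin 2 → ℝ, p ≠ q ∧ E = {p, q})) := by
  intro sA sB Φ N E
  have hba : Bf β α = b := by rw [hsymm β α, hb]
  have hΦ : Φ = Set.range (rv α β b) ∪ Set.range (rw' α β b) := phi_eq hαα hββ hb hba
  refine ⟨?_, ?_, ?_⟩
  · -- case -1 < b
    intro hgt
    rcases hbval with hle | ⟨k, hk, hbk⟩
    · linarith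
    have hperv : ∀ n : ℤ, rv α β b (n + 2*(k:ℤ)) = rv α β b n := by
      intro n
      unfold rv
      have h1 := useq_cos_periodic hk hbk n
      have h2 := useq_cos_periodic hk hbk (n+1)
      rw [show n + 2*(k:ℤ) + 1 = (n+1) + 2*(k:ℤ) by ring]
      rw [h2, h1]
    have hperw : ∀ n : ℤ, rw' α β b (n + 2*(k:ℤ)) = rw' α β b n := by
      intro n
      unfold rw'
      have h1 := useq_cos_periodic hk hbk n
      have h2 := useq_cos_periodic hk hbk (n+1)
      rw [show n + 2*(k:ℤ) + 1 = (n+1) + 2*(k:ℤ) by ring]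
      rw [h2, h1]
    have hk0 : (0:ℤ) < 2*(k:ℤ) := by positivity
    have hfinΦ : Φ.Finite := by
      rw [hΦ]
      exact (periodic_range_finite _ _ hk0 hperv).union (periodic_range_finite _ _ hk0 hperw)
    have hfinN : N.Finite := hfinΦ.image _
    apply Set.eq_empty_iff_forall_notMem.mpr
    intro x hx
    exact not_accPt_finite hfinN x hx
  · -- case b = -1
    intro hbeq
    subst hbeq
    have hN : N = Set.range (fun n : ℤ => Aseq (-1) n • α + Cseq (-1) n • β) ∪
        Set.range (fun n : ℤ => Cseq (-1) n • α + Aseq (-1) n • β) := by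
      show (fun ρ => (f ρ)⁻¹ • ρ) '' Φ = _
      rw [hΦ]
      exact image_norm f hfα hfβ
    set g : ℤ → (Fin 2 → ℝ) := fun n : ℤ => Aseq (-1) n • α + Cseq (-1) n • β with hg
    set g' : ℤ → (Fin 2 → ℝ) := fun n : ℤ => Cseq (-1) n • α + Aseq (-1) n • β with hg'
    set p' : Fin 2 → ℝ := (2⁻¹:ℝ) • α + (2⁻¹:ℝ) • β with hp'
    have hP : (2:ℝ)⁻¹ • (α + β) = p' := by rw [hp', smul_add]
    have hgT : Tendsto g atTop (𝓝 p') :=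
      (tendsto_Aseq_neg_one.smul_const α).add (tendsto_Cseq_neg_one.smul_const β)
    have hg'T : Tendsto g' atTop (𝓝 p') :=
      (tendsto_Cseq_neg_one.smul_const α).add (tendsto_Aseq_neg_one.smul_const β)
    have hrefl : ∀ n : ℤ, g' (-n-1) = g n := by
      intro n
      simp only [hg, hg', Aseq_reflect, Cseq_reflect]
    have hrefl' : ∀ n : ℤ, g (-n-1) = g' n := by
      intro n
      simp only [hg, hg', Aseq_reflect, Cseq_reflect]
    have hgB : Tendsto g atBot (𝓝 p') := by
      have := hg'T.comp tendsto_negsub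
      refine this.congr fun n => ?_
      simp only [Function.comp_apply]
      exact hrefl n
    have hg'B : Tendsto g' atBot (𝓝 p') := by
      have := hgT.comp tendsto_negsub
      refine this.congr fun n => ?_
      simp only [Function.comp_apply]
      exact hrefl' n
    apply Set.eq_singleton_iff_unique_mem.mpr
    constructor
    · show AccPt ((2:ℝ)⁻¹ • (α + β)) (Filter.principal N)
      rw [hP]
      apply accPt_of_tendsto (fun m : ℕ => g (m:ℤ)) p'
      · exact hgT.comp tendsto_natCast_atTop_atTop
      · intro m hc
        have hco := indep_coords hind hc
        exact Aseq_neg_one_ne (m:ℤ) (by positivity) hco.1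
      · intro m
        rw [hN]
        exact Or.inl ⟨(m:ℤ), rfl⟩
    · intro x hx
      have hx' : AccPt x (Filter.principal N) := hx
      have := accPt_pair (N := N) (p := p') (q := p') ?_ hx'
      · rw [hP]
        tauto
      · intro ε hε
        rw [hN]
        exact finite_outside_union g g' p' p' hgT hgB hg'T hg'B hε
  · -- case b < -1
    intro hlt
    obtain ⟨hl, hl0, hinv, hD, hl1⟩ := lam_facts hlt
    have hN : N = Set.range (fun n : ℤ => Aseq b n • α + Cseq b n • β) ∪
        Set.range (fun n : ℤ => Cseq b n • α + Aseq b n • β) := by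
      show (fun ρ => (f ρ)⁻¹ • ρ) '' Φ = _
      rw [hΦ]
      exact image_norm f hfα hfβ
    set g : ℤ → (Fin 2 → ℝ) := fun n : ℤ => Aseq b n • α + Cseq b n • β with hg
    set g' : ℤ → (Fin 2 → ℝ) := fun n : ℤ => Cseq b n • α + Aseq b n • β with hg'
    set P : Fin 2 → ℝ := (lam b/(lam b+1)) • α + (1/(lam b+1)) • β with hPdef
    set Q : Fin 2 → ℝ := (1/(lam b+1)) • α + (lam b/(lam b+1)) • β with hQdef
    have hgT : Tendsto g atTop (𝓝 P) :=
      ((tendsto_Aseq_lam hlt).smul_const α).add ((tendsto_Cseq_lam hlt).smul_const β)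
    have hg'T : Tendsto g' atTop (𝓝 Q) :=
      ((tendsto_Cseq_lam hlt).smul_const α).add ((tendsto_Aseq_lam hlt).smul_const β)
    have hrefl : ∀ n : ℤ, g' (-n-1) = g n := by
      intro n
      simp only [hg, hg', Aseq_reflect, Cseq_reflect]
    have hrefl' : ∀ n : ℤ, g (-n-1) = g' n := by
      intro n
      simp only [hg, hg', Aseq_reflect, Cseq_reflect]
    have hgB : Tendsto g atBot (𝓝 Q) := by
      have := hg'T.comp tendsto_negsub
      refine this.congr fun n => ?_
      simp only [Function.comp_apply]
      exact hrefl n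
    have hg'B : Tendsto g' atBot (𝓝 P) := by
      have := hgT.comp tendsto_negsub
      refine this.congr fun n => ?_
      simp only [Function.comp_apply]
      exact hrefl' n
    have hPQ : P ≠ Q := by
      intro hc
      have hco := (indep_coords hind hc).1
      rw [div_eq_div_iff hl1 hl1] at hco
      nlinarith
    have hEPQ : E = {P, Q} := by
      apply Set.Subset.antisymm
      · intro x hx
        have hx' : AccPt x (Filter.principal N) := hx
        have := accPt_pair (N := N) (p := P) (q := Q) ?_ hx'
        · rcases this with h | h
          · exact Or.inl h
          · exact Or.inr h
        · intro ε hε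
          rw [hN]
          exact finite_outside_union g g' P Q hgT hgB hg'T hg'B hε
      · rintro x (rfl | rfl)
        · show AccPt P (Filter.principal N)
          apply accPt_of_tendsto (fun m : ℕ => g (m:ℤ)) P
          · exact hgT.comp tendsto_natCast_atTop_atTop
          · intro m hc
            have hco := indep_coords hind hc
            exact Aseq_ne_lam hlt (n := (m:ℤ)) (by positivity) hco.1
          · intro m
            rw [hN]
            exact Or.inl ⟨(m:ℤ), rfl⟩
        · show AccPt Q (Filter.principal N)
          apply accPt_of_tendsto (fun m : ℕ => g' (m:ℤ)) Q
          · exact hg'T.comp tendsto_natCast_atTop_atTop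
          · intro m hc
            have hco := indep_coords hind hc
            exact Aseq_ne_lam hlt (n := (m:ℤ)) (by positivity) hco.2
          · intro m
            rw [hN]
            exact Or.inr ⟨(m:ℤ), rfl⟩
    have hquad := lam_quad hlt
    have hset : {v : Fin 2 → ℝ | Bf v v = 0 ∧ f v = 1} = {P, Q} := by
      apply Set.Subset.antisymm
      · intro v ⟨hBv, hfv⟩
        -- express v in terms of α, β
        have hcard : Fintype.card (Fin 2) = Module.finrank ℝ (Fin 2 → ℝ) := by
          simp [Module.finrank_fin_fun]
        have hBa : ⇑(basisOfLinearIndependentOfCardEqFinrank hind hcard) = ![α, β] :=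
          coe_basisOfLinearIndependentOfCardEqFinrank hind hcard
        have hspan : Submodule.span ℝ (Set.range ![α, β]) = ⊤ := by
          rw [← hBa]
          exact (basisOfLinearIndependentOfCardEqFinrank hind hcard).span_eq
        have hrange : Set.range ![α, β] = {α, β} := by
          ext w
          constructor
          · rintro ⟨i, rfl⟩
            fin_cases i
            · exact Or.inl rfl
            · exact Or.inr rfl
          · rintro (rfl | rfl)
            exacts [⟨0, rfl⟩, ⟨1, rfl⟩]
        have hvmem : v ∈ Submodule.span ℝ ({α, β} : Set (Fin 2 → ℝ)) := by
          rw [← hrange, hspan]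
          trivial
        obtain ⟨x, y, hxy⟩ := Submodule.mem_span_pair.mp hvmem
        rw [← hxy] at hBv hfv
        rw [Bf_combo hαα hββ hb hba] at hBv
        rw [map_add, LinearMap.map_smul, LinearMap.map_smul, hfα, hfβ, smul_eq_mul,
          smul_eq_mul, mul_one, mul_one] at hfv
        have hy : y = 1 - x := by linarith
        subst hy
        have hfact : ((lam b + 1)*x - lam b) * ((lam b + 1)*x - 1) = 0 := by
          linear_combination lam b * hBv + (x^2 - x) * hquad
        rcases mul_eq_zero.mp hfact with h | h
        · left
          rw [← hxy]
          have hx : x = lam b/(lam b + 1) := by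
            field_simp
            linarith
          have hy2 : 1 - x = 1/(lam b + 1) := by
            rw [hx]
            field_simp
            ring
          rw [hy2, hx]
        · right
          rw [← hxy]
          have hx : x = 1/(lam b + 1) := by
            field_simp
            linarith
          have hy2 : 1 - x = lam b/(lam b + 1) := by
            rw [hx]
            field_simp
            ring
          rw [hy2, hx]
          exact rfl
      · have expand1 : (lam b/(lam b+1))^2 + 2*b*(lam b/(lam b+1))*(1/(lam b+1)) +
            (1/(lam b+1))^2 = (lam b^2 + 2*b*lam b + 1)/((lam b+1)^2) := by
          field_simp
        have expand2 : (1/(lam b+1))^2 + 2*b*(1/(lam b+1))*(lam b/(lam b+1)) +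
            (lam b/(lam b+1))^2 = (lam b^2 + 2*b*lam b + 1)/((lam b+1)^2) := by
          field_simp
          ring
        rintro v (rfl | rfl)
        · constructor
          · rw [hPdef, Bf_combo hαα hββ hb hba, expand1, hquad, zero_div]
          · rw [hPdef, map_add, LinearMap.map_smul, LinearMap.map_smul, hfα, hfβ,
              smul_eq_mul, smul_eq_mul, mul_one, mul_one]
            field_simp <;> ring
        · constructor
          · rw [hQdef, Bf_combo hαα hββ hb hba, expand2, hquad, zero_div]
          · rw [hQdef, map_add, LinearMap.map_smul, LinearMap.map_smul, hfα, hfβ,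
              smul_eq_mul, smul_eq_mul, mul_one, mul_one]
            field_simp <;> ring
    exact ⟨hEPQ.trans hset.symm, P, Q, hPQ, hEPQ⟩
end
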